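/- arXiv:1809.07534 — 2 statements merged into one kernel-verified Lean document; each statement's English description precedes it below -/
import Mathlib

section
/- Let ℓ ≥ 2 and let A_x be the graph obtained as the union of: a copy of the backbone-path B_ℓ; one additional vertex x ∉ V(B_ℓ) together with the edge {w_{1,2},w_{1,3}} and the four edges {w_{1,i},x} for i ∈ {1,2,3,4}; and, for each 1 ≤ i ≤ ℓ−1, a square-path U_i connecting w_iᵇ to w_{i+1}ᵃ, where the U_i are pairwise vertex-disjoint, each U_i intersects V(B_ℓ) exactly in the four vertices w_{i,3}, w_{i,4}, w_{i+1,1}, w_{i+1,2}, and no U_i contains x. Then A_x is a (w₁ᵃ, w_ℓᵇ, {x})-absorber, i.e., for every X' ⊆ {x} there is a square-path in A_x connecting w₁ᵃ = (w_{1,1},w_{1,2}) to w_ℓᵇ = (w_{ℓ,3},w_{ℓ,4}) whose vertex set is exactly V(A_x) \ X'. -/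
/-- The `ℓ`-square-path `P²_ℓ` on vertices `0, …, ℓ-1`: vertices at distance at most 2 are
adjacent. -/
def squarePath (ℓ : ℕ) : SimpleGraph (Fin ℓ) :=
  SimpleGraph.fromRel fun i j => i.val < j.val ∧ j.val ≤ i.val + 2

/-- A square-path in `G` connecting `(a₁, a₂)` to `(b₁, b₂)` with vertex set `S` and edge set
`E`: an embedding `g` of `P²_ℓ` into `G` (for some `ℓ ≥ 4`) whose first two vertices are
`a₁, a₂`, whose last two vertices are `b₁, b₂`, whose image is `S` and whose image edge set
is `E`. -/
def IsSquarePathConn {V : Type*} (G : SimpleGraph V) (a₁ a₂ b₁ b₂ : V)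
    (S : Set V) (E : Set (Sym2 V)) : Prop :=
  ∃ ℓ : ℕ, ∃ h : 4 ≤ ℓ, ∃ g : Fin ℓ → V, Function.Injective g ∧
    (∀ i j : Fin ℓ, (squarePath ℓ).Adj i j → G.Adj (g i) (g j)) ∧
    g ⟨0, by omega⟩ = a₁ ∧ g ⟨1, by omega⟩ = a₂ ∧
    g ⟨ℓ - 2, by omega⟩ = b₁ ∧ g ⟨ℓ - 1, by omega⟩ = b₂ ∧
    Set.range g = S ∧ Sym2.map g '' (squarePath ℓ).edgeSet = E

/-- The five edges making `(x₁, x₂, x₃, x₄)` a 4-square-path. -/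
def sq4 {V : Type*} (x₁ x₂ x₃ x₄ : V) : Set (Sym2 V) :=
  {s(x₁, x₂), s(x₂, x₃), s(x₃, x₄), s(x₁, x₃), s(x₂, x₄)}

/-- The edge set of a copy of the `ℓ`-backbone-path `B_ℓ` with vertices `w i j`
(`1 ≤ i ≤ ℓ`, `1 ≤ j ≤ 4`). -/
def backboneEdgeSet {V : Type*} (ℓ : ℕ) (w : ℕ → ℕ → V) : Set (Sym2 V) :=
  {s(w 1 1, w 1 2), s(w 1 3, w 1 4)} ∪
  (⋃ i ∈ Set.Icc 2 ℓ, sq4 (w i 1) (w i 2) (w i 3) (w i 4)) ∪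
  sq4 (w 1 1) (w 1 2) (w 2 2) (w 2 1) ∪
  (⋃ i ∈ Set.Icc 1 (ℓ - 2), sq4 (w i 4) (w i 3) (w (i + 2) 2) (w (i + 2) 1)) ∪
  sq4 (w (ℓ - 1) 4) (w (ℓ - 1) 3) (w ℓ 3) (w ℓ 4)

lemma getElem_idx_congr {α : Type*} (L : List α) {i j : ℕ} (h : i = j)
    (hi : i < L.length) : L[i]'hi = L[j]'(h ▸ hi) := by subst h; rfl

def Chain2 {V : Type*} (G : SimpleGraph V) (L : List V) : Prop :=
  ∀ k d : ℕ, 1 ≤ d → d ≤ 2 → ∀ h : k + d < L.length,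
    G.Adj (L[k]'(by omega)) (L[k+d]'h)

lemma chain2_reverse {V : Type*} {G : SimpleGraph V} {L : List V}
    (h : Chain2 G L) : Chain2 G L.reverse := by
  intro k d hd1 hd2 hh
  rw [List.getElem_reverse, List.getElem_reverse]
  rw [List.length_reverse] at hh
  have h1 : L.length - 1 - (k + d) + d = L.length - 1 - k := by omega
  have h2 := h (L.length - 1 - (k + d)) d hd1 hd2 (by omega)
  rw [getElem_idx_congr L h1] at h2
  exact h2.symm

lemma chain2_append {V : Type*} {G : SimpleGraph V} {L1 L2 : List V}
    (h1 : Chain2 G L1) (h2 : Chain2 G L2)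
    (hl1 : 2 ≤ L1.length) (hl2 : 2 ≤ L2.length)
    (e1 : G.Adj (L1[L1.length - 1]'(by omega)) (L2[0]'(by omega)))
    (e2 : G.Adj (L1[L1.length - 2]'(by omega)) (L2[0]'(by omega)))
    (e3 : G.Adj (L1[L1.length - 1]'(by omega)) (L2[1]'(by omega))) :
    Chain2 G (L1 ++ L2) := by
  intro k d hd1 hd2 hh
  rw [List.length_append] at hh
  rcases lt_or_ge (k + d) L1.length with hc | hc
  · rw [List.getElem_append_left (by omega), List.getElem_append_left hc]
    exact h1 k d hd1 hd2 hc
  rcases lt_or_ge k L1.length with hc2 | hc2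
  · -- boundary
    rw [List.getElem_append_left hc2, List.getElem_append_right hc]
    interval_cases d
    · have hk : k = L1.length - 1 := by omega
      rw [getElem_idx_congr L1 hk, getElem_idx_congr L2 (show k + 1 - L1.length = 0 by omega)]
      exact e1
    · rcases Nat.lt_or_ge k (L1.length - 1) with hk | hk
      · rw [getElem_idx_congr L1 (show k = L1.length - 2 by omega),
          getElem_idx_congr L2 (show k + 2 - L1.length = 0 by omega)]
        exact e2
      · rw [getElem_idx_congr L1 (show k = L1.length - 1 by omega),
          getElem_idx_congr L2 (show k + 2 - L1.length = 1 by omega)]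
        exact e3
  · rw [List.getElem_append_right hc2, List.getElem_append_right (by omega),
      getElem_idx_congr L2 (show k + d - L1.length = (k - L1.length) + d by omega)]
    exact h2 _ d hd1 hd2 (by omega)

lemma isSquarePathConn_of_list {V : Type*} (G : SimpleGraph V) (L : List V)
    {a₁ a₂ b₁ b₂ : V} {S : Set V}
    (h4 : 4 ≤ L.length) (hnd : L.Nodup) (hch : Chain2 G L)
    (ha1 : L[0]'(by omega) = a₁) (ha2 : L[1]'(by omega) = a₂)
    (hb1 : L[L.length - 2]'(by omega) = b₁) (hb2 : L[L.length - 1]'(by omega) = b₂)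
    (hS : {v | v ∈ L} = S) :
    ∃ E, IsSquarePathConn G a₁ a₂ b₁ b₂ S E := by
  refine ⟨_, L.length, h4, L.get, List.nodup_iff_injective_get.mp hnd, ?_, ?_, ?_, ?_, ?_, ?_, rfl⟩
  · intro i j hadj
    rw [squarePath, SimpleGraph.fromRel_adj] at hadj
    obtain ⟨hne, hij | hij⟩ := hadj
    · have h2 := hch i ((j : ℕ) - (i : ℕ)) (by omega) (by omega) (by omega)
      rw [getElem_idx_congr L (show (i : ℕ) + ((j : ℕ) - (i : ℕ)) = (j : ℕ) by omega)] at h2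
      simpa [List.get_eq_getElem] using h2
    · have h2 := (hch j ((i : ℕ) - (j : ℕ)) (by omega) (by omega) (by omega)).symm
      rw [getElem_idx_congr L (show (j : ℕ) + ((i : ℕ) - (j : ℕ)) = (i : ℕ) by omega)] at h2
      simpa [List.get_eq_getElem] using h2
  · simpa using ha1
  · simpa using ha2
  · simpa using hb1
  · simpa using hb2
  · rw [Set.range_list_get, hS]

lemma list_of_isSquarePathConn {V : Type*} {G : SimpleGraph V}
    {a₁ a₂ b₁ b₂ : V} {S : Set V} {E : Set (Sym2 V)}
    (h : IsSquarePathConn G a₁ a₂ b₁ b₂ S E) :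
    ∃ L : List V, ∃ h4 : 4 ≤ L.length, L.Nodup ∧ Chain2 G L ∧
      L[0]'(by omega) = a₁ ∧ L[1]'(by omega) = a₂ ∧
      L[L.length - 2]'(by omega) = b₁ ∧ L[L.length - 1]'(by omega) = b₂ ∧
      {v | v ∈ L} = S := by
  obtain ⟨n, hn, g, hinj, hadj, h1, h2, h3, h4, hrange, -⟩ := h
  refine ⟨List.ofFn g, by simpa using hn, List.nodup_ofFn.mpr hinj, ?_, ?_, ?_, ?_, ?_, ?_⟩
  · intro k d hd1 hd2 hh
    rw [List.length_ofFn] at hh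
    rw [List.getElem_ofFn, List.getElem_ofFn]
    apply hadj
    rw [squarePath, SimpleGraph.fromRel_adj]
    refine ⟨by simp [Fin.ext_iff]; omega, Or.inl ⟨by simp; omega, by simp; omega⟩⟩
  · rw [List.getElem_ofFn]; exact h1
  · rw [List.getElem_ofFn]; exact h2
  · rw [List.getElem_ofFn]; simp only [List.length_ofFn]; exact h3
  · rw [List.getElem_ofFn]; simp only [List.length_ofFn]; exact h4
  · ext v; simp only [Set.mem_setOf_eq, List.mem_ofFn, ← hrange, Set.mem_range]

lemma concat_segments {V : Type*} (G : SimpleGraph V) (K : ℕ → List V)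
    (s1 s2 e1 e2 : ℕ → V) (m : ℕ) (hm : 1 ≤ m)
    (hlen : ∀ i, 1 ≤ i → i ≤ m → 4 ≤ (K i).length)
    (hnd : ∀ i, 1 ≤ i → i ≤ m → (K i).Nodup)
    (hch : ∀ i, 1 ≤ i → i ≤ m → Chain2 G (K i))
    (hdisj : ∀ i j, 1 ≤ i → i ≤ m → 1 ≤ j → j ≤ m → i ≠ j → (K i).Disjoint (K j))
    (hs1 : ∀ i, 1 ≤ i → i ≤ m → (K i)[0]? = some (s1 i))
    (hs2 : ∀ i, 1 ≤ i → i ≤ m → (K i)[1]? = some (s2 i))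
    (he1 : ∀ i, 1 ≤ i → i ≤ m → (K i)[(K i).length - 2]? = some (e1 i))
    (he2 : ∀ i, 1 ≤ i → i ≤ m → (K i)[(K i).length - 1]? = some (e2 i))
    (hcross : ∀ i, 1 ≤ i → i + 1 ≤ m →
      G.Adj (e2 i) (s1 (i+1)) ∧ G.Adj (e1 i) (s1 (i+1)) ∧ G.Adj (e2 i) (s2 (i+1))) :
    ∃ L : List V, L.Nodup ∧ Chain2 G L ∧ 4 ≤ L.length ∧
      L[0]? = some (s1 1) ∧ L[1]? = some (s2 1) ∧
      L[L.length - 2]? = some (e1 m) ∧ L[L.length - 1]? = some (e2 m) ∧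
      (∀ v, v ∈ L ↔ ∃ i, 1 ≤ i ∧ i ≤ m ∧ v ∈ K i) := by
  induction m, hm using Nat.le_induction with
  | base =>
    refine ⟨K 1, hnd 1 le_rfl le_rfl, hch 1 le_rfl le_rfl, hlen 1 le_rfl le_rfl,
      hs1 1 le_rfl le_rfl, hs2 1 le_rfl le_rfl, he1 1 le_rfl le_rfl, he2 1 le_rfl le_rfl, ?_⟩
    intro v
    constructor
    · exact fun hv => ⟨1, le_rfl, le_rfl, hv⟩
    · rintro ⟨i, hi1, hi2, hv⟩; rwa [le_antisymm hi2 hi1] at hv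
  | succ n hn ih =>
    obtain ⟨L, Lnd, Lch, Llen, L0, L1, Le1, Le2, Lmem⟩ :=
      ih (fun i h1 h2 => hlen i h1 (by omega)) (fun i h1 h2 => hnd i h1 (by omega))
        (fun i h1 h2 => hch i h1 (by omega))
        (fun i j a b c d e => hdisj i j a (by omega) c (by omega) e)
        (fun i h1 h2 => hs1 i h1 (by omega)) (fun i h1 h2 => hs2 i h1 (by omega))
        (fun i h1 h2 => he1 i h1 (by omega)) (fun i h1 h2 => he2 i h1 (by omega))
        (fun i h1 h2 => hcross i h1 (by omega))
    have hKlen : 4 ≤ (K (n+1)).length := hlen (n+1) (by omega) le_rfl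
    -- extract getElem forms
    obtain ⟨hL2a, hLe1⟩ := List.getElem?_eq_some_iff.mp Le1
    obtain ⟨hL2b, hLe2⟩ := List.getElem?_eq_some_iff.mp Le2
    obtain ⟨hK0, hKs1⟩ := List.getElem?_eq_some_iff.mp (hs1 (n+1) (by omega) le_rfl)
    obtain ⟨hK1, hKs2⟩ := List.getElem?_eq_some_iff.mp (hs2 (n+1) (by omega) le_rfl)
    obtain ⟨c1, c2, c3⟩ := hcross n hn le_rfl
    refine ⟨L ++ K (n+1), ?_, ?_, ?_, ?_, ?_, ?_, ?_, ?_⟩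
    · rw [List.nodup_append]
      refine ⟨Lnd, hnd (n+1) (by omega) le_rfl, fun a haL b haK hab => ?_⟩
      subst hab
      obtain ⟨i, hi1, hi2, hv⟩ := (Lmem a).mp haL
      exact hdisj i (n+1) hi1 (by omega) (by omega) le_rfl (by omega) hv haK
    · refine chain2_append Lch (hch (n+1) (by omega) le_rfl) (by omega) (by omega) ?_ ?_ ?_
      · rw [hLe2, hKs1]; exact c1
      · rw [hLe1, hKs1]; exact c2
      · rw [hLe2, hKs2]; exact c3
    · rw [List.length_append]; omega
    · rw [List.getElem?_append_left (by omega)]; exact L0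
    · rw [List.getElem?_append_left (by omega)]; exact L1
    · rw [List.length_append, List.getElem?_append_right (by omega)]
      have : L.length + (K (n+1)).length - 2 - L.length = (K (n+1)).length - 2 := by omega
      rw [this]; exact he1 (n+1) (by omega) le_rfl
    · rw [List.length_append, List.getElem?_append_right (by omega)]
      have : L.length + (K (n+1)).length - 1 - L.length = (K (n+1)).length - 1 := by omega
      rw [this]; exact he2 (n+1) (by omega) le_rfl
    · intro v
      rw [List.mem_append, Lmem]
      constructor
      · rintro (⟨i, h1, h2, hv⟩ | hv)
        · exact ⟨i, h1, by omega, hv⟩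
        · exact ⟨n+1, by omega, le_rfl, hv⟩
      · rintro ⟨i, h1, h2, hv⟩
        rcases Nat.lt_or_ge i (n+1) with hlt | hge
        · exact Or.inl ⟨i, h1, by omega, hv⟩
        · exact Or.inr (by rwa [show i = n+1 by omega] at hv)
lemma getElem_of_getElem?' {α : Type*} {L : List α} {i : ℕ} {a : α}
    (h : L[i]? = some a) (hi : i < L.length) : L[i]'hi = a := by
  rw [List.getElem?_eq_getElem hi] at h; exact Option.some.inj h

lemma chain2_pair {V : Type*} {G : SimpleGraph V} {a b : V} (h : G.Adj a b) :
    Chain2 G [a, b] := by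
  intro k d hd1 hd2 hh
  simp only [List.length_cons, List.length_nil] at hh
  have hk : k = 0 ∧ d = 1 := by omega
  obtain ⟨rfl, rfl⟩ := hk
  simpa using h

lemma chain2_triple {V : Type*} {G : SimpleGraph V} {a b c : V}
    (h1 : G.Adj a b) (h2 : G.Adj b c) (h3 : G.Adj a c) : Chain2 G [a, b, c] := by
  intro k d hd1 hd2 hh
  simp only [List.length_cons, List.length_nil] at hh
  have hc : (d = 1 ∧ k = 0) ∨ (d = 1 ∧ k = 1) ∨ (d = 2 ∧ k = 0) := by omega
  rcases hc with ⟨rfl, rfl⟩ | ⟨rfl, rfl⟩ | ⟨rfl, rfl⟩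
  · simpa using h1
  · simpa using h2
  · simpa using h3



lemma getElem_append_sub {α : Type*} (L1 L2 : List α) (d : ℕ) (hd : 1 ≤ d) (h : d ≤ L2.length) :
    ((L1 ++ L2)[(L1 ++ L2).length - d]'(by rw [List.length_append]; omega)) =
      L2[L2.length - d]'(by omega) := by
  have h1 : (L1 ++ L2).length - d = L1.length + (L2.length - d) := by
    rw [List.length_append]; omega
  rw [getElem_idx_congr _ h1, List.getElem_append_right (by omega)]
  exact getElem_idx_congr L2 (by omega) _

lemma reverse_getElem? {α : Type*} (L : List α) (k : ℕ) (hk : k < L.length) (a : α)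
    (h : L[L.length - 1 - k]? = some a) : L.reverse[k]? = some a := by
  rw [List.getElem?_eq_getElem (by rw [List.length_reverse]; omega), List.getElem_reverse,
    ← List.getElem?_eq_getElem (by omega)]
  exact h

/-- The single-vertex absorber: a backbone-path `B_ℓ` with vertices `w i j`, an extra vertex
`x` joined to the four vertices `w 1 j` together with the edge `{w 1 2, w 1 3}`, and
square-paths `U_i` connecting `w_iᵇ` to `w_{i+1}ᵃ`, is an
`((w 1 1, w 1 2), (w ℓ 3, w ℓ 4), {x})`-absorber: for every `X' ⊆ {x}` it contains a
square-path connecting `(w 1 1, w 1 2)` to `(w ℓ 3, w ℓ 4)` with vertex set exactly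
`V(A_x) \ X'`. -/
theorem statement_10 {V : Type*} (ℓ : ℕ) (hℓ : 2 ≤ ℓ)
    (w : ℕ → ℕ → V) (x : V) (A : SimpleGraph V)
    (SU : ℕ → Set V) (EU : ℕ → Set (Sym2 V))
    (hw : Set.InjOn (fun q : ℕ × ℕ => w q.1 q.2) (Set.Icc 1 ℓ ×ˢ Set.Icc 1 4))
    (hx : x ∉ {v : V | ∃ i ∈ Set.Icc 1 ℓ, ∃ j ∈ Set.Icc 1 4, v = w i j})
    (hAedges : A.edgeSet = backboneEdgeSet ℓ w ∪ {s(w 1 2, w 1 3)} ∪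
      (⋃ j ∈ Set.Icc 1 4, {s(w 1 j, x)}) ∪ ⋃ i ∈ Set.Icc 1 (ℓ - 1), EU i)
    (hU : ∀ i ∈ Set.Icc 1 (ℓ - 1),
      IsSquarePathConn A (w i 3) (w i 4) (w (i + 1) 1) (w (i + 1) 2) (SU i) (EU i))
    (hUdisj : ∀ i ∈ Set.Icc 1 (ℓ - 1), ∀ j ∈ Set.Icc 1 (ℓ - 1), i ≠ j →
      Disjoint (SU i) (SU j))
    (hUB : ∀ i ∈ Set.Icc 1 (ℓ - 1),
      SU i ∩ {v : V | ∃ i' ∈ Set.Icc 1 ℓ, ∃ j ∈ Set.Icc 1 4, v = w i' j} =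
        {w i 3, w i 4, w (i + 1) 1, w (i + 1) 2})
    (hxU : ∀ i ∈ Set.Icc 1 (ℓ - 1), x ∉ SU i) :
    ∀ X' ⊆ ({x} : Set V), ∃ E : Set (Sym2 V),
      IsSquarePathConn A (w 1 1) (w 1 2) (w ℓ 3) (w ℓ 4)
        (({v : V | ∃ i ∈ Set.Icc 1 ℓ, ∃ j ∈ Set.Icc 1 4, v = w i j} ∪ {x} ∪
          ⋃ i ∈ Set.Icc 1 (ℓ - 1), SU i) \ X') E := by
  intro X' hX'
  -- basic injectivity facts
  have hwinj : ∀ a b c d : ℕ, 1 ≤ a → a ≤ ℓ → 1 ≤ b → b ≤ 4 → 1 ≤ c → c ≤ ℓ →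
      1 ≤ d → d ≤ 4 → w a b = w c d → a = c ∧ b = d := by
    intro a b c d ha ha' hb hb' hc hc' hd hd' h
    have h2 := hw (Set.mk_mem_prod (Set.mem_Icc.mpr ⟨ha, ha'⟩) (Set.mem_Icc.mpr ⟨hb, hb'⟩))
      (Set.mk_mem_prod (Set.mem_Icc.mpr ⟨hc, hc'⟩) (Set.mem_Icc.mpr ⟨hd, hd'⟩)) h
    exact ⟨congrArg Prod.fst h2, congrArg Prod.snd h2⟩
  have hxW : ∀ i j : ℕ, 1 ≤ i → i ≤ ℓ → 1 ≤ j → j ≤ 4 → x ≠ w i j := by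
    intro i j h1 h2 h3 h4 hx'
    exact hx ⟨i, Set.mem_Icc.mpr ⟨h1, h2⟩, j, Set.mem_Icc.mpr ⟨h3, h4⟩, hx'⟩
  -- adjacency facts
  have hedge : ∀ u v : V, s(u, v) ∈ A.edgeSet → A.Adj u v := fun u v h => A.mem_edgeSet.mp h
  have hBB : ∀ e ∈ backboneEdgeSet ℓ w, e ∈ A.edgeSet := by
    rw [hAedges]; intro e he
    exact Set.mem_union_left _ (Set.mem_union_left _ (Set.mem_union_left _ he))
  have abb : ∀ u v : V, s(u, v) ∈ backboneEdgeSet ℓ w → A.Adj u v :=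
    fun u v h => hedge u v (hBB _ h)
  have m1 : ∀ e ∈ ({s(w 1 1, w 1 2), s(w 1 3, w 1 4)} : Set (Sym2 V)), e ∈ backboneEdgeSet ℓ w := by
    intro e he
    exact Set.mem_union_left _ (Set.mem_union_left _ (Set.mem_union_left _
      (Set.mem_union_left _ he)))
  have mrow : ∀ i, 2 ≤ i → i ≤ ℓ → ∀ e ∈ sq4 (w i 1) (w i 2) (w i 3) (w i 4),
      e ∈ backboneEdgeSet ℓ w := by
    intro i h1 h2 e he
    exact Set.mem_union_left _ (Set.mem_union_left _ (Set.mem_union_left _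
      (Set.mem_union_right _ (Set.mem_biUnion (Set.mem_Icc.mpr ⟨h1, h2⟩) he))))
  have mfirst : ∀ e ∈ sq4 (w 1 1) (w 1 2) (w 2 2) (w 2 1), e ∈ backboneEdgeSet ℓ w := by
    intro e he
    exact Set.mem_union_left _ (Set.mem_union_left _ (Set.mem_union_right _ he))
  have mcross : ∀ i, 1 ≤ i → i ≤ ℓ - 2 → ∀ e ∈ sq4 (w i 4) (w i 3) (w (i+2) 2) (w (i+2) 1),
      e ∈ backboneEdgeSet ℓ w := by
    intro i h1 h2 e he
    exact Set.mem_union_left _ (Set.mem_union_right _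
      (Set.mem_biUnion (Set.mem_Icc.mpr ⟨h1, h2⟩) he))
  have mlast : ∀ e ∈ sq4 (w (ℓ-1) 4) (w (ℓ-1) 3) (w ℓ 3) (w ℓ 4), e ∈ backboneEdgeSet ℓ w :=
    fun e he => Set.mem_union_right _ he
  -- individual adjacencies
  have a112 : A.Adj (w 1 1) (w 1 2) := abb _ _ (m1 _ (by simp [sq4]))
  have a134 : A.Adj (w 1 3) (w 1 4) := abb _ _ (m1 _ (by simp [sq4]))
  have arow13 : ∀ i, 2 ≤ i → i ≤ ℓ → A.Adj (w i 1) (w i 3) :=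
    fun i h1 h2 => abb _ _ (mrow i h1 h2 _ (by simp [sq4]))
  have arow23 : ∀ i, 2 ≤ i → i ≤ ℓ → A.Adj (w i 2) (w i 3) :=
    fun i h1 h2 => abb _ _ (mrow i h1 h2 _ (by simp [sq4]))
  have arow24 : ∀ i, 2 ≤ i → i ≤ ℓ → A.Adj (w i 2) (w i 4) :=
    fun i h1 h2 => abb _ _ (mrow i h1 h2 _ (by simp [sq4]))
  have arow34 : ∀ i, 2 ≤ i → i ≤ ℓ → A.Adj (w i 3) (w i 4) :=
    fun i h1 h2 => abb _ _ (mrow i h1 h2 _ (by simp [sq4]))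
  have af1222 : A.Adj (w 1 2) (w 2 2) := abb _ _ (mfirst _ (by simp [sq4]))
  have af1122 : A.Adj (w 1 1) (w 2 2) := abb _ _ (mfirst _ (by simp [sq4]))
  have af1221 : A.Adj (w 1 2) (w 2 1) := abb _ _ (mfirst _ (by simp [sq4]))
  have ac32 : ∀ i, 1 ≤ i → i ≤ ℓ - 2 → A.Adj (w i 3) (w (i+2) 2) :=
    fun i h1 h2 => abb _ _ (mcross i h1 h2 _ (by simp [sq4]))
  have ac42 : ∀ i, 1 ≤ i → i ≤ ℓ - 2 → A.Adj (w i 4) (w (i+2) 2) :=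
    fun i h1 h2 => abb _ _ (mcross i h1 h2 _ (by simp [sq4]))
  have ac31 : ∀ i, 1 ≤ i → i ≤ ℓ - 2 → A.Adj (w i 3) (w (i+2) 1) :=
    fun i h1 h2 => abb _ _ (mcross i h1 h2 _ (by simp [sq4]))
  have al33 : A.Adj (w (ℓ-1) 3) (w ℓ 3) := abb _ _ (mlast _ (by simp [sq4]))
  have al43 : A.Adj (w (ℓ-1) 4) (w ℓ 3) := abb _ _ (mlast _ (by simp [sq4]))
  have al34 : A.Adj (w (ℓ-1) 3) (w ℓ 4) := abb _ _ (mlast _ (by simp [sq4]))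
  have alast34 : A.Adj (w ℓ 3) (w ℓ 4) := abb _ _ (mlast _ (by simp [sq4]))
  have a1213 : A.Adj (w 1 2) (w 1 3) := by
    apply hedge
    rw [hAedges]
    exact Set.mem_union_left _ (Set.mem_union_left _ (Set.mem_union_right _ rfl))
  have ax : ∀ j, 1 ≤ j → j ≤ 4 → A.Adj (w 1 j) x := by
    intro j h1 h2
    apply hedge
    rw [hAedges]
    exact Set.mem_union_left _ (Set.mem_union_right _
      (Set.mem_biUnion (Set.mem_Icc.mpr ⟨h1, h2⟩) rfl))
  -- choose lists for the square-paths U_i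
  have hKex : ∀ i : ℕ, ∃ L : List V, 1 ≤ i → i ≤ ℓ - 1 →
      4 ≤ L.length ∧ L.Nodup ∧ Chain2 A L ∧
      L[0]? = some (w i 3) ∧ L[1]? = some (w i 4) ∧
      L[L.length - 2]? = some (w (i+1) 1) ∧ L[L.length - 1]? = some (w (i+1) 2) ∧
      ∀ v, v ∈ L ↔ v ∈ SU i := by
    intro i
    by_cases h : 1 ≤ i ∧ i ≤ ℓ - 1
    · obtain ⟨L, h4, hnd, hch, h0, h1, h2, h3, hS⟩ :=
        list_of_isSquarePathConn (hU i (Set.mem_Icc.mpr h))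
      refine ⟨L, fun _ _ => ⟨h4, hnd, hch, ?_, ?_, ?_, ?_, fun v => ?_⟩⟩
      · rw [List.getElem?_eq_getElem (by omega), h0]
      · rw [List.getElem?_eq_getElem (by omega), h1]
      · rw [List.getElem?_eq_getElem (by omega), h2]
      · rw [List.getElem?_eq_getElem (by omega), h3]
      · exact Iff.intro (fun hv => hS ▸ hv) (fun hv => by
          have : v ∈ {u | u ∈ L} := hS.symm ▸ hv
          exact this)
    · exact ⟨[], fun h1 h2 => absurd ⟨h1, h2⟩ h⟩
  choose K hK using hKex
  -- vertices of backbone not in SU i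
  have hsub4 : ∀ k, 1 ≤ k → k ≤ ℓ - 1 →
      ({w k 3, w k 4, w (k+1) 1, w (k+1) 2} : Set V) ⊆ SU k := by
    intro k h1 h2
    rw [← hUB k (Set.mem_Icc.mpr ⟨h1, h2⟩)]
    exact Set.inter_subset_left
  have hnotin : ∀ i, 1 ≤ i → i ≤ ℓ - 1 → ∀ a b, 1 ≤ a → a ≤ ℓ → 1 ≤ b → b ≤ 4 →
      ¬(a = i ∧ b = 3) → ¬(a = i ∧ b = 4) → ¬(a = i+1 ∧ b = 1) → ¬(a = i+1 ∧ b = 2) →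
      w a b ∉ SU i := by
    intro i hi1 hi2 a b ha1 ha2 hb1 hb2 n1 n2 n3 n4 hmem
    have hm2 : w a b ∈ SU i ∩ {v : V | ∃ i' ∈ Set.Icc 1 ℓ, ∃ j ∈ Set.Icc 1 4, v = w i' j} :=
      ⟨hmem, ⟨a, Set.mem_Icc.mpr ⟨ha1, ha2⟩, b, Set.mem_Icc.mpr ⟨hb1, hb2⟩, rfl⟩⟩
    rw [hUB i (Set.mem_Icc.mpr ⟨hi1, hi2⟩)] at hm2
    rcases hm2 with h | h | h | h
    · exact n1 (hwinj a b i 3 ha1 ha2 hb1 hb2 hi1 (by omega) (by omega) (by omega) h)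
    · exact n2 (hwinj a b i 4 ha1 ha2 hb1 hb2 hi1 (by omega) (by omega) (by omega) h)
    · exact n3 (hwinj a b (i+1) 1 ha1 ha2 hb1 hb2 (by omega) (by omega) (by omega) (by omega) h)
    · exact n4 (hwinj a b (i+1) 2 ha1 ha2 hb1 hb2 (by omega) (by omega) (by omega) (by omega) h)
  -- decomposition of the backbone vertex set
  have hWdec : ∀ v ∈ {v : V | ∃ i ∈ Set.Icc 1 ℓ, ∃ j ∈ Set.Icc 1 4, v = w i j},
      v = w 1 1 ∨ v = w 1 2 ∨ v = w ℓ 3 ∨ v = w ℓ 4 ∨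
        ∃ i, 1 ≤ i ∧ i ≤ ℓ - 1 ∧ v ∈ SU i := by
    rintro v ⟨i, hi, j, hj, rfl⟩
    rw [Set.mem_Icc] at hi hj
    have hj4 : j = 1 ∨ j = 2 ∨ j = 3 ∨ j = 4 := by omega
    have he : i - 1 + 1 = i := by omega
    rcases hj4 with rfl | rfl | rfl | rfl
    · rcases Nat.eq_or_lt_of_le hi.1 with h1 | h1
      · exact Or.inl (by rw [← h1])
      · refine Or.inr (Or.inr (Or.inr (Or.inr ⟨i - 1, by omega, by omega, ?_⟩)))
        apply hsub4 (i-1) (by omega) (by omega)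
        rw [he]; simp
    · rcases Nat.eq_or_lt_of_le hi.1 with h1 | h1
      · exact Or.inr (Or.inl (by rw [← h1]))
      · refine Or.inr (Or.inr (Or.inr (Or.inr ⟨i - 1, by omega, by omega, ?_⟩)))
        apply hsub4 (i-1) (by omega) (by omega)
        rw [he]; simp
    · rcases Nat.eq_or_lt_of_le hi.2 with h1 | h1
      · exact Or.inr (Or.inr (Or.inl (by rw [h1])))
      · refine Or.inr (Or.inr (Or.inr (Or.inr ⟨i, by omega, by omega, ?_⟩)))
        apply hsub4 i (by omega) (by omega)
        simp
    · rcases Nat.eq_or_lt_of_le hi.2 with h1 | h1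
      · exact Or.inr (Or.inr (Or.inr (Or.inl (by rw [h1]))))
      · refine Or.inr (Or.inr (Or.inr (Or.inr ⟨i, by omega, by omega, ?_⟩)))
        apply hsub4 i (by omega) (by omega)
        simp
  -- not-in-SU facts for the four corner vertices
  have h11n : ∀ i, 1 ≤ i → i ≤ ℓ - 1 → w 1 1 ∉ SU i := fun i h1 h2 =>
    hnotin i h1 h2 1 1 (by omega) (by omega) (by omega) (by omega)
      (by omega) (by omega) (by omega) (by omega)
  have h12n : ∀ i, 1 ≤ i → i ≤ ℓ - 1 → w 1 2 ∉ SU i := fun i h1 h2 =>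
    hnotin i h1 h2 1 2 (by omega) (by omega) (by omega) (by omega)
      (by omega) (by omega) (by omega) (by omega)
  have hl3n : ∀ i, 1 ≤ i → i ≤ ℓ - 1 → w ℓ 3 ∉ SU i := fun i h1 h2 =>
    hnotin i h1 h2 ℓ 3 (by omega) (by omega) (by omega) (by omega)
      (by omega) (by omega) (by omega) (by omega)
  have hl4n : ∀ i, 1 ≤ i → i ≤ ℓ - 1 → w ℓ 4 ∉ SU i := fun i h1 h2 =>
    hnotin i h1 h2 ℓ 4 (by omega) (by omega) (by omega) (by omega)
      (by omega) (by omega) (by omega) (by omega)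
  have hwne : ∀ a b c d : ℕ, 1 ≤ a → a ≤ ℓ → 1 ≤ b → b ≤ 4 → 1 ≤ c → c ≤ ℓ →
      1 ≤ d → d ≤ 4 → (a ≠ c ∨ b ≠ d) → w a b ≠ w c d := by
    intro a b c d h1 h2 h3 h4 h5 h6 h7 h8 hne h
    obtain ⟨he1, he2⟩ := hwinj a b c d h1 h2 h3 h4 h5 h6 h7 h8 h
    tauto
  have hdisjK : ∀ i j, 1 ≤ i → i ≤ ℓ - 1 → 1 ≤ j → j ≤ ℓ - 1 → i ≠ j →
      (K i).Disjoint (K j) := by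
    intro i j hi1 hi2 hj1 hj2 hne a hai haj
    exact Set.disjoint_left.mp
      (hUdisj i (Set.mem_Icc.mpr ⟨hi1, hi2⟩) j (Set.mem_Icc.mpr ⟨hj1, hj2⟩) hne)
      (((hK i hi1 hi2).2.2.2.2.2.2.2 a).mp hai) (((hK j hj1 hj2).2.2.2.2.2.2.2 a).mp haj)
  have hll : ℓ - 1 + 1 = ℓ := by omega
  rcases Set.subset_singleton_iff_eq.mp hX' with rfl | rfl
  · -- X' = ∅ : use x
    rw [Set.diff_empty]
    obtain ⟨L, Lnd, Lch, Llen, L0, L1, Le1, Le2, Lmem⟩ :=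
      concat_segments A K (fun i => w i 3) (fun i => w i 4)
        (fun i => w (i+1) 1) (fun i => w (i+1) 2) (ℓ - 1) (by omega)
        (fun i h1 h2 => (hK i h1 h2).1)
        (fun i h1 h2 => (hK i h1 h2).2.1)
        (fun i h1 h2 => (hK i h1 h2).2.2.1)
        hdisjK
        (fun i h1 h2 => (hK i h1 h2).2.2.2.1)
        (fun i h1 h2 => (hK i h1 h2).2.2.2.2.1)
        (fun i h1 h2 => (hK i h1 h2).2.2.2.2.2.1)
        (fun i h1 h2 => (hK i h1 h2).2.2.2.2.2.2.1)
        (fun i h1 h2 => ⟨arow23 (i+1) (by omega) (by omega),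
          arow13 (i+1) (by omega) (by omega), arow24 (i+1) (by omega) (by omega)⟩)
    rw [hll] at Le1 Le2
    have LmemSU : ∀ v, v ∈ L ↔ ∃ i, 1 ≤ i ∧ i ≤ ℓ - 1 ∧ v ∈ SU i := by
      intro v
      rw [Lmem]
      constructor
      · rintro ⟨i, h1, h2, h⟩
        exact ⟨i, h1, h2, ((hK i h1 h2).2.2.2.2.2.2.2 v).mp h⟩
      · rintro ⟨i, h1, h2, h⟩
        exact ⟨i, h1, h2, ((hK i h1 h2).2.2.2.2.2.2.2 v).mpr h⟩
    have eL0 : L[0]'(by omega) = w 1 3 := getElem_of_getElem?' L0 (by omega)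
    have eL1 : L[1]'(by omega) = w 1 4 := getElem_of_getElem?' L1 (by omega)
    have eLp : L[L.length - 2]'(by omega) = w ℓ 1 := getElem_of_getElem?' Le1 (by omega)
    have eLl : L[L.length - 1]'(by omega) = w ℓ 2 := getElem_of_getElem?' Le2 (by omega)
    -- the full list
    have hM2 : 2 ≤ ([w 1 1, w 1 2, x] ++ L).length := by simp
    have eMl : ([w 1 1, w 1 2, x] ++ L)[([w 1 1, w 1 2, x] ++ L).length - 1]'(by omega)
        = w ℓ 2 := by
      rw [getElem_append_sub [w 1 1, w 1 2, x] L 1 (by omega) (by omega)]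
      exact eLl
    have eMp : ([w 1 1, w 1 2, x] ++ L)[([w 1 1, w 1 2, x] ++ L).length - 2]'(by omega)
        = w ℓ 1 := by
      rw [getElem_append_sub [w 1 1, w 1 2, x] L 2 (by omega) (by omega)]
      exact eLp
    have chM : Chain2 A ([w 1 1, w 1 2, x] ++ L) := by
      refine chain2_append
        (chain2_triple a112 (ax 2 (by omega) (by omega)) (ax 1 (by omega) (by omega)))
        Lch (by simp) (by omega) ?_ ?_ ?_
      · show A.Adj x _
        rw [eL0]; exact (ax 3 (by omega) (by omega)).symm
      · show A.Adj (w 1 2) _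
        rw [eL0]; exact a1213
      · show A.Adj x _
        rw [eL1]; exact (ax 4 (by omega) (by omega)).symm
    have ndM : ([w 1 1, w 1 2, x] ++ L).Nodup := by
      rw [List.nodup_append]
      refine ⟨?_, Lnd, ?_⟩
      · refine List.nodup_cons.mpr ⟨?_, List.nodup_cons.mpr ⟨?_, List.nodup_singleton x⟩⟩
        · intro h
          rcases List.mem_cons.mp h with h | h
          · exact hwne 1 1 1 2 (by omega) (by omega) (by omega) (by omega) (by omega)
              (by omega) (by omega) (by omega) (by omega) h
          · exact hxW 1 1 (by omega) (by omega) (by omega) (by omega)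
              (List.mem_singleton.mp h).symm
        · intro h
          exact hxW 1 2 (by omega) (by omega) (by omega) (by omega)
            (List.mem_singleton.mp h).symm
      · intro a ha b haL hab
        subst hab
        obtain ⟨i, h1, h2, hsu⟩ := (LmemSU a).mp haL
        simp only [List.mem_cons, List.mem_singleton, List.not_mem_nil, or_false] at ha
        rcases ha with rfl | rfl | rfl
        · exact h11n i h1 h2 hsu
        · exact h12n i h1 h2 hsu
        · exact hxU i (Set.mem_Icc.mpr ⟨h1, h2⟩) hsu
    refine isSquarePathConn_of_list A (([w 1 1, w 1 2, x] ++ L) ++ [w ℓ 3, w ℓ 4])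
      (by simp) ?_ ?_ ?_ ?_ ?_ ?_ ?_
    · rw [List.nodup_append]
      refine ⟨ndM, by
        simp only [List.nodup_cons, List.mem_singleton, List.not_mem_nil, List.nodup_nil,
          not_false_iff, and_true, true_and]
        exact hwne ℓ 3 ℓ 4 (by omega) (by omega) (by omega) (by omega) (by omega)
          (by omega) (by omega) (by omega) (by omega), ?_⟩
      intro a ha b hb hab
      subst hab
      simp only [List.mem_cons, List.mem_singleton, List.not_mem_nil, or_false] at hb
      rw [List.mem_append] at ha
      rcases ha with ha | haL
      · simp only [List.mem_cons, List.mem_singleton, List.not_mem_nil, or_false] at ha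
        rcases ha with rfl | rfl | rfl
        · rcases hb with h | h
          · exact hwne 1 1 ℓ 3 (by omega) (by omega) (by omega) (by omega) (by omega)
              (by omega) (by omega) (by omega) (by omega) h
          · exact hwne 1 1 ℓ 4 (by omega) (by omega) (by omega) (by omega) (by omega)
              (by omega) (by omega) (by omega) (by omega) h
        · rcases hb with h | h
          · exact hwne 1 2 ℓ 3 (by omega) (by omega) (by omega) (by omega) (by omega)
              (by omega) (by omega) (by omega) (by omega) h
          · exact hwne 1 2 ℓ 4 (by omega) (by omega) (by omega) (by omega) (by omega)
              (by omega) (by omega) (by omega) (by omega) h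
        · rcases hb with h | h
          · exact hxW ℓ 3 (by omega) (by omega) (by omega) (by omega) h
          · exact hxW ℓ 4 (by omega) (by omega) (by omega) (by omega) h
      · obtain ⟨i, h1, h2, hsu⟩ := (LmemSU a).mp haL
        rcases hb with rfl | rfl
        · exact hl3n i h1 h2 hsu
        · exact hl4n i h1 h2 hsu
    · refine chain2_append chM (chain2_pair alast34) hM2 (by simp) ?_ ?_ ?_
      · rw [eMl]; exact arow23 ℓ (by omega) (by omega)
      · rw [eMp]; exact arow13 ℓ (by omega) (by omega)
      · rw [eMl]; exact arow24 ℓ (by omega) (by omega)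
    · rfl
    · rfl
    · rw [getElem_append_sub _ [w ℓ 3, w ℓ 4] 2 (by omega) (by simp)]; rfl
    · rw [getElem_append_sub _ [w ℓ 3, w ℓ 4] 1 (by omega) (by simp)]; rfl
    · ext v
      simp only [Set.mem_setOf_eq, List.mem_append, List.mem_cons, List.mem_singleton,
        List.not_mem_nil, or_false, Set.mem_union, Set.mem_iUnion, Set.mem_Icc,
        Set.mem_singleton_iff, exists_prop]
      constructor
      · rintro (((rfl | rfl | rfl) | hL) | (rfl | rfl))
        · exact Or.inl (Or.inl ⟨1, ⟨by omega, by omega⟩, 1, ⟨by omega, by omega⟩, rfl⟩)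
        · exact Or.inl (Or.inl ⟨1, ⟨by omega, by omega⟩, 2, ⟨by omega, by omega⟩, rfl⟩)
        · exact Or.inl (Or.inr rfl)
        · obtain ⟨i, h1, h2, hsu⟩ := (LmemSU v).mp hL
          exact Or.inr ⟨i, ⟨h1, h2⟩, hsu⟩
        · exact Or.inl (Or.inl ⟨ℓ, ⟨by omega, by omega⟩, 3, ⟨by omega, by omega⟩, rfl⟩)
        · exact Or.inl (Or.inl ⟨ℓ, ⟨by omega, by omega⟩, 4, ⟨by omega, by omega⟩, rfl⟩)
      · rintro ((hW | rfl) | ⟨i, ⟨h1, h2⟩, hsu⟩)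
        · rcases hWdec v hW with rfl | rfl | rfl | rfl | ⟨i, h1, h2, hsu⟩
          · exact Or.inl (Or.inl (Or.inl rfl))
          · exact Or.inl (Or.inl (Or.inr (Or.inl rfl)))
          · exact Or.inr (Or.inl rfl)
          · exact Or.inr (Or.inr rfl)
          · exact Or.inl (Or.inr ((LmemSU v).mpr ⟨i, h1, h2, hsu⟩))
        · exact Or.inl (Or.inl (Or.inr (Or.inr rfl)))
        · exact Or.inl (Or.inr ((LmemSU v).mpr ⟨i, h1, h2, hsu⟩))
  · -- X' = {x} : avoid x, use the reversed segments
    obtain ⟨L, Lnd, Lch, Llen, L0, L1, Le1, Le2, Lmem⟩ :=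
      concat_segments A (fun i => (K i).reverse) (fun i => w (i+1) 2) (fun i => w (i+1) 1)
        (fun i => w i 4) (fun i => w i 3) (ℓ - 1) (by omega)
        (fun i h1 h2 => by simpa using (hK i h1 h2).1)
        (fun i h1 h2 => List.nodup_reverse.mpr (hK i h1 h2).2.1)
        (fun i h1 h2 => chain2_reverse (hK i h1 h2).2.2.1)
        (fun i j hi1 hi2 hj1 hj2 hne a hai haj =>
          hdisjK i j hi1 hi2 hj1 hj2 hne (List.mem_reverse.mp hai) (List.mem_reverse.mp haj))
        (fun i h1 h2 => by
          refine reverse_getElem? (K i) 0 (by have := (hK i h1 h2).1; omega) _ ?_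
          rw [show (K i).length - 1 - 0 = (K i).length - 1 by omega]
          exact (hK i h1 h2).2.2.2.2.2.2.1)
        (fun i h1 h2 => by
          refine reverse_getElem? (K i) 1 (by have := (hK i h1 h2).1; omega) _ ?_
          rw [show (K i).length - 1 - 1 = (K i).length - 2 by omega]
          exact (hK i h1 h2).2.2.2.2.2.1)
        (fun i h1 h2 => by
          refine reverse_getElem? (K i) ((K i).reverse.length - 2)
            (by have := (hK i h1 h2).1; rw [List.length_reverse]; omega) _ ?_
          rw [show (K i).length - 1 - ((K i).reverse.length - 2) = 1 by
            rw [List.length_reverse]; have := (hK i h1 h2).1; omega]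
          exact (hK i h1 h2).2.2.2.2.1)
        (fun i h1 h2 => by
          refine reverse_getElem? (K i) ((K i).reverse.length - 1)
            (by have := (hK i h1 h2).1; rw [List.length_reverse]; omega) _ ?_
          rw [show (K i).length - 1 - ((K i).reverse.length - 1) = 0 by
            rw [List.length_reverse]; have := (hK i h1 h2).1; omega]
          exact (hK i h1 h2).2.2.2.1)
        (fun i h1 h2 => ⟨ac32 i h1 (by omega), ac42 i h1 (by omega), ac31 i h1 (by omega)⟩)
    have LmemSU : ∀ v, v ∈ L ↔ ∃ i, 1 ≤ i ∧ i ≤ ℓ - 1 ∧ v ∈ SU i := by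
      intro v
      rw [Lmem]
      constructor
      · rintro ⟨i, h1, h2, h⟩
        exact ⟨i, h1, h2, ((hK i h1 h2).2.2.2.2.2.2.2 v).mp (List.mem_reverse.mp h)⟩
      · rintro ⟨i, h1, h2, h⟩
        exact ⟨i, h1, h2, List.mem_reverse.mpr (((hK i h1 h2).2.2.2.2.2.2.2 v).mpr h)⟩
    have eL0 : L[0]'(by omega) = w 2 2 := getElem_of_getElem?' L0 (by omega)
    have eL1 : L[1]'(by omega) = w 2 1 := getElem_of_getElem?' L1 (by omega)
    have eLp : L[L.length - 2]'(by omega) = w (ℓ-1) 4 := getElem_of_getElem?' Le1 (by omega)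
    have eLl : L[L.length - 1]'(by omega) = w (ℓ-1) 3 := getElem_of_getElem?' Le2 (by omega)
    have hM2 : 2 ≤ ([w 1 1, w 1 2] ++ L).length := by simp
    have eMl : ([w 1 1, w 1 2] ++ L)[([w 1 1, w 1 2] ++ L).length - 1]'(by omega)
        = w (ℓ-1) 3 := by
      rw [getElem_append_sub [w 1 1, w 1 2] L 1 (by omega) (by omega)]
      exact eLl
    have eMp : ([w 1 1, w 1 2] ++ L)[([w 1 1, w 1 2] ++ L).length - 2]'(by omega)
        = w (ℓ-1) 4 := by
      rw [getElem_append_sub [w 1 1, w 1 2] L 2 (by omega) (by omega)]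
      exact eLp
    have chM : Chain2 A ([w 1 1, w 1 2] ++ L) := by
      refine chain2_append (chain2_pair a112) Lch (by simp) (by omega) ?_ ?_ ?_
      · show A.Adj (w 1 2) _
        rw [eL0]; exact af1222
      · show A.Adj (w 1 1) _
        rw [eL0]; exact af1122
      · show A.Adj (w 1 2) _
        rw [eL1]; exact af1221
    have ndM : ([w 1 1, w 1 2] ++ L).Nodup := by
      rw [List.nodup_append]
      refine ⟨?_, Lnd, ?_⟩
      · refine List.nodup_cons.mpr ⟨?_, List.nodup_singleton _⟩
        intro h
        exact hwne 1 1 1 2 (by omega) (by omega) (by omega) (by omega) (by omega)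
          (by omega) (by omega) (by omega) (by omega) (List.mem_singleton.mp h)
      · intro a ha b haL hab
        subst hab
        obtain ⟨i, h1, h2, hsu⟩ := (LmemSU a).mp haL
        rcases List.mem_cons.mp ha with rfl | ha
        · exact h11n i h1 h2 hsu
        · rw [List.mem_singleton.mp ha] at hsu
          exact h12n i h1 h2 hsu
    refine isSquarePathConn_of_list A (([w 1 1, w 1 2] ++ L) ++ [w ℓ 3, w ℓ 4])
      (by simp) ?_ ?_ ?_ ?_ ?_ ?_ ?_
    · rw [List.nodup_append]
      refine ⟨ndM, by
        simp only [List.nodup_cons, List.mem_singleton, List.not_mem_nil, List.nodup_nil,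
          not_false_iff, and_true, true_and]
        exact hwne ℓ 3 ℓ 4 (by omega) (by omega) (by omega) (by omega) (by omega)
          (by omega) (by omega) (by omega) (by omega), ?_⟩
      intro a ha b hb hab
      subst hab
      simp only [List.mem_cons, List.mem_singleton, List.not_mem_nil, or_false] at hb
      rw [List.mem_append] at ha
      rcases ha with ha | haL
      · simp only [List.mem_cons, List.mem_singleton, List.not_mem_nil, or_false] at ha
        rcases ha with rfl | rfl
        · rcases hb with h | h
          · exact hwne 1 1 ℓ 3 (by omega) (by omega) (by omega) (by omega) (by omega)
              (by omega) (by omega) (by omega) (by omega) h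
          · exact hwne 1 1 ℓ 4 (by omega) (by omega) (by omega) (by omega) (by omega)
              (by omega) (by omega) (by omega) (by omega) h
        · rcases hb with h | h
          · exact hwne 1 2 ℓ 3 (by omega) (by omega) (by omega) (by omega) (by omega)
              (by omega) (by omega) (by omega) (by omega) h
          · exact hwne 1 2 ℓ 4 (by omega) (by omega) (by omega) (by omega) (by omega)
              (by omega) (by omega) (by omega) (by omega) h
      · obtain ⟨i, h1, h2, hsu⟩ := (LmemSU a).mp haL
        rcases hb with rfl | rfl
        · exact hl3n i h1 h2 hsu
        · exact hl4n i h1 h2 hsu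
    · refine chain2_append chM (chain2_pair alast34) hM2 (by simp) ?_ ?_ ?_
      · rw [eMl]; exact al33
      · rw [eMp]; exact al43
      · rw [eMl]; exact al34
    · rfl
    · rfl
    · rw [getElem_append_sub _ [w ℓ 3, w ℓ 4] 2 (by omega) (by simp)]; rfl
    · rw [getElem_append_sub _ [w ℓ 3, w ℓ 4] 1 (by omega) (by simp)]; rfl
    · ext v
      simp only [Set.mem_setOf_eq, List.mem_append, List.mem_cons, List.mem_singleton,
        List.not_mem_nil, or_false, Set.mem_union, Set.mem_iUnion, Set.mem_Icc,
        Set.mem_singleton_iff, Set.mem_diff, exists_prop]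
      constructor
      · rintro (((rfl | rfl) | hL) | (rfl | rfl))
        · exact ⟨Or.inl (Or.inl ⟨1, ⟨by omega, by omega⟩, 1, ⟨by omega, by omega⟩, rfl⟩),
            fun h => hxW 1 1 (by omega) (by omega) (by omega) (by omega) h.symm⟩
        · exact ⟨Or.inl (Or.inl ⟨1, ⟨by omega, by omega⟩, 2, ⟨by omega, by omega⟩, rfl⟩),
            fun h => hxW 1 2 (by omega) (by omega) (by omega) (by omega) h.symm⟩
        · obtain ⟨i, h1, h2, hsu⟩ := (LmemSU v).mp hL
          exact ⟨Or.inr ⟨i, ⟨h1, h2⟩, hsu⟩,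
            fun h => hxU i (Set.mem_Icc.mpr ⟨h1, h2⟩) (h ▸ hsu)⟩
        · exact ⟨Or.inl (Or.inl ⟨ℓ, ⟨by omega, by omega⟩, 3, ⟨by omega, by omega⟩, rfl⟩),
            fun h => hxW ℓ 3 (by omega) (by omega) (by omega) (by omega) h.symm⟩
        · exact ⟨Or.inl (Or.inl ⟨ℓ, ⟨by omega, by omega⟩, 4, ⟨by omega, by omega⟩, rfl⟩),
            fun h => hxW ℓ 4 (by omega) (by omega) (by omega) (by omega) h.symm⟩
      · rintro ⟨(hW | rfl) | ⟨i, ⟨h1, h2⟩, hsu⟩, hne⟩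
        · rcases hWdec v hW with rfl | rfl | rfl | rfl | ⟨i, h1, h2, hsu⟩
          · exact Or.inl (Or.inl (Or.inl rfl))
          · exact Or.inl (Or.inl (Or.inr rfl))
          · exact Or.inr (Or.inl rfl)
          · exact Or.inr (Or.inr rfl)
          · exact Or.inl (Or.inr ((LmemSU v).mpr ⟨i, h1, h2, hsu⟩))
        · exact absurd rfl hne
        · exact Or.inl (Or.inr ((LmemSU v).mpr ⟨i, h1, h2, hsu⟩))
end

section
/- For every α ∈ (0,1) there exist ε > 0 and n₀ ∈ ℕ such that the following holds in the standing setting (for this ε and any n ≥ n₀). If |F₁₂| ≥ ε⁻⁵·ñ·log n and deg_{F₁₂}(v, W₁) ≥ ε⁻⁴·log n/p for all v ∈ U, then e_{F₂₃}(U, W₃ \ X) ≥ (α·ñ·p/4)·|U|. -/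
open SimpleGraph

/-- `deg_H(v, W)`: number of neighbours of `v` in `H` that lie in `W`. -/
noncomputable def degIn {V : Type*} (H : SimpleGraph V) (v : V) (W : Set V) : ℕ :=
  (H.neighborSet v ∩ W).ncard

/-- `deg_H(v)`: degree of `v` in `H`. -/
noncomputable def degOf {V : Type*} (H : SimpleGraph V) (v : V) : ℕ :=
  (H.neighborSet v).ncard

/-- `e_H(X, Y)`: number of edges of `H` with one endpoint in `X` and the other in `Y`. -/
noncomputable def eGraph {V : Type*} (H : SimpleGraph V) (X Y : Set V) : ℕ :=
  {e ∈ H.edgeSet | ∃ x ∈ X, ∃ y ∈ Y, e = s(x, y)}.ncard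

/-- `e_F(X, Y)` for an edge set `F`: number of edges of `F` with one endpoint in `X` and the
other in `Y`. -/
noncomputable def eF {V : Type*} (F : Set (Sym2 V)) (X Y : Set V) : ℕ :=
  {e ∈ F | ∃ x ∈ X, ∃ y ∈ Y, e = s(x, y)}.ncard

/-- `deg_F(v, W)`: number of edges of `F` joining `v` to a vertex of `W`. -/
noncomputable def degF {V : Type*} (F : Set (Sym2 V)) (v : V) (W : Set V) : ℕ :=
  {e ∈ F | ∃ w ∈ W, e = s(v, w)}.ncard

/-- `deg_F(v)`: number of edges of `F` incident to `v`. -/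
noncomputable def degFtot {V : Type*} (F : Set (Sym2 V)) (v : V) : ℕ :=
  {e ∈ F | v ∈ e}.ncard

/-- `G ∈ 𝒢(Γ, n, β, p)`: spanning subgraphs of `Γ` with minimum degree at least
`(2/3 + β) n p` in which every edge lies on at least `β n p²` triangles. -/
def MemFamily (n : ℕ) (Γ G : SimpleGraph (Fin n)) (β p : ℝ) : Prop :=
  G ≤ Γ ∧ (∀ v : Fin n, ((2 : ℝ) / 3 + β) * n * p ≤ (degOf G v : ℝ)) ∧
    ∀ u v : Fin n, G.Adj u v →
      β * n * p ^ 2 ≤ (((G.neighborSet u ∩ G.neighborSet v).ncard : ℝ))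

/-- `W` is `(α, ε, p)`-good (with respect to `Γ` and `G ⊆ Γ`): properties (G1)–(G7). -/
def IsGood (n : ℕ) (Γ G : SimpleGraph (Fin n)) (α ε p : ℝ) (W : Set (Fin n)) : Prop :=
  -- (G1)
  (∀ X Y : Set (Fin n), X ⊆ W → Disjoint X Y →
    (ε ^ (-3 : ℤ) * Real.log n / p ≤ (X.ncard : ℝ)) →
    (ε ^ (-3 : ℤ) * Real.log n / p ≤ (Y.ncard : ℝ)) →
    (1 - ε) * X.ncard * Y.ncard * p ≤ (eGraph Γ X Y : ℝ) ∧
      (eGraph Γ X Y : ℝ) ≤ (1 + ε) * X.ncard * Y.ncard * p) ∧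
  -- (G2)
  (∀ v : Fin n, (1 - ε) * W.ncard * p ≤ (degIn Γ v W : ℝ) ∧
    (degIn Γ v W : ℝ) ≤ (1 + ε) * W.ncard * p) ∧
  -- (G3)
  (∀ v : Fin n, (1 - ε) * (degOf G v : ℝ) * W.ncard / n ≤ (degIn G v W : ℝ) ∧
    (degIn G v W : ℝ) ≤ (1 + ε) * (degOf G v : ℝ) * W.ncard / n) ∧
  -- (G4)
  (∀ v : Fin n, ((2 : ℝ) / 3 + α) * W.ncard * p ≤ (degIn G v W : ℝ)) ∧
  -- (G5)
  (∀ u v : Fin n, G.Adj u v →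
    α * W.ncard * p ^ 2 ≤ (((G.neighborSet u ∩ G.neighborSet v ∩ W).ncard : ℝ))) ∧
  -- (G6)
  (∀ W' : Set (Fin n), W' ⊆ W → (ε * W.ncard ≤ (W'.ncard : ℝ)) →
    ∀ P : Finset (Sym2 (Fin n)),
      (∀ e ∈ P, ¬ e.IsDiag ∧ ∀ x ∈ e, x ∉ W) →
      (ε ^ (-10 : ℤ) * Real.log n / p ^ 2 ≤ (P.card : ℝ)) →
      (∀ v : Fin n, ({e : Sym2 (Fin n) | e ∈ P ∧ v ∈ e}.ncard : ℝ) ≤ 1 + 1 / p) →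
      (∑ e ∈ P, ({w : Fin n | w ∈ W' ∧ ∀ x ∈ e, G.Adj x w}.ncard : ℝ)) ≤
        (1 + ε) * P.card * W'.ncard * p ^ 2) ∧
  -- (G7)
  (∀ P : Finset (Sym2 (Fin n)), (↑P : Set (Sym2 (Fin n))) ⊆ G.edgeSet →
    (∀ e ∈ P, ∀ x ∈ e, x ∉ W) →
    ((P.card : ℝ) ≤ 1 + ε / p ^ 2) →
    (∀ v : Fin n, ({e : Sym2 (Fin n) | e ∈ P ∧ v ∈ e}.ncard : ℝ) ≤ 1 + ε / p) →
    α * P.card * W.ncard * p ^ 2 ≤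
      (((⋃ e ∈ P, {w : Fin n | w ∈ W ∧ ∀ x ∈ e, G.Adj x w})).ncard : ℝ))

/-- `U`: the set of vertices of `W₂` incident to an edge of `F₁₂`. -/
def Uset {V : Type*} (F₁₂ : Set (Sym2 V)) (W₂ : Set V) : Set V :=
  {v ∈ W₂ | ∃ e ∈ F₁₂, v ∈ e}

/-- `F₂₃`: the edges of `G` between `W₂` and `W₃` extending an edge of `F₁₂` via a
triangle. -/
def F23 {V : Type*} (G : SimpleGraph V) (F₁₂ : Set (Sym2 V)) (W₁ W₂ W₃ : Set V) :
    Set (Sym2 V) :=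
  {e | ∃ w₂ ∈ W₂, ∃ w₃ ∈ W₃, e = s(w₂, w₃) ∧ G.Adj w₂ w₃ ∧
    ∃ w₁ ∈ W₁, s(w₁, w₂) ∈ F₁₂ ∧ G.Adj w₁ w₃}

namespace Aux13

variable {n : ℕ}

lemma sym2_inj (u : Fin n) : Function.Injective (fun w : Fin n => s(u, w)) :=
  fun _ _ h => Sym2.congr_right.mp h

lemma setOf_eq_image (F : Set (Sym2 (Fin n))) (u : Fin n) (W : Set (Fin n)) :
    {e ∈ F | ∃ w ∈ W, e = s(u, w)} = (fun w => s(u, w)) '' {w | w ∈ W ∧ s(u, w) ∈ F} := by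
  ext e
  constructor
  · rintro ⟨heF, w, hw, rfl⟩
    exact ⟨w, ⟨hw, heF⟩, rfl⟩
  · rintro ⟨w, ⟨hw, hF⟩, rfl⟩
    exact ⟨hF, w, hw, rfl⟩

lemma degF_eq (F : Set (Sym2 (Fin n))) (u : Fin n) (W : Set (Fin n)) :
    degF F u W = {w | w ∈ W ∧ s(u, w) ∈ F}.ncard := by
  rw [degF, setOf_eq_image, Set.ncard_image_of_injective _ (sym2_inj u)]

/-- Key counting lemma: sum of sizes of `S w` over `w ∈ A` is at most the number of
edges of `F` between `A` and `B`, provided `S w ⊆ B` and `s(w,y) ∈ F` for `y ∈ S w`. -/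
lemma sum_ncard_le_eF (F : Set (Sym2 (Fin n))) (A B : Set (Fin n)) (hd : Disjoint A B)
    (S : Fin n → Set (Fin n)) (hSB : ∀ w ∈ A, S w ⊆ B)
    (hSF : ∀ w ∈ A, ∀ y ∈ S w, s(w, y) ∈ F) :
    ∑ w ∈ A.toFinite.toFinset, (S w).ncard ≤ eF F A B := by
  classical
  set g : Fin n → Finset (Sym2 (Fin n)) :=
    fun w => (S w).toFinite.toFinset.image (fun y => s(w, y)) with hg
  have hcard : ∀ w : Fin n, (g w).card = (S w).ncard := by
    intro w
    rw [hg]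
    rw [Finset.card_image_of_injective _ (sym2_inj w),
      Set.ncard_eq_toFinset_card _ (S w).toFinite]
  have hdisj : ∀ w₁ ∈ A.toFinite.toFinset, ∀ w₂ ∈ A.toFinite.toFinset, w₁ ≠ w₂ →
      Disjoint (g w₁) (g w₂) := by
    intro w₁ h₁ w₂ h₂ hne
    rw [Set.Finite.mem_toFinset] at h₁ h₂
    rw [Finset.disjoint_left]
    intro e he₁ he₂
    simp only [hg, Finset.mem_image, Set.Finite.mem_toFinset] at he₁ he₂
    obtain ⟨y₁, hy₁, rfl⟩ := he₁
    obtain ⟨y₂, hy₂, he⟩ := he₂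
    rcases Sym2.eq_iff.mp he with ⟨ha, hb⟩ | ⟨ha, hb⟩
    · exact hne (ha.symm)
    · have : w₂ ∈ B := ha ▸ hSB w₁ h₁ hy₁
      exact Set.disjoint_left.mp hd h₂ this
  calc ∑ w ∈ A.toFinite.toFinset, (S w).ncard
      = ∑ w ∈ A.toFinite.toFinset, (g w).card := by
        exact Finset.sum_congr rfl fun w _ => (hcard w).symm
    _ = (A.toFinite.toFinset.biUnion g).card := (Finset.card_biUnion hdisj).symm
    _ = ((A.toFinite.toFinset.biUnion g : Finset (Sym2 (Fin n))) : Set (Sym2 (Fin n))).ncard :=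
        (Set.ncard_coe_finset _).symm
    _ ≤ eF F A B := by
        rw [eF]
        apply Set.ncard_le_ncard _ (Set.toFinite _)
        intro e he
        simp only [Finset.coe_biUnion, Set.mem_iUnion, Finset.mem_coe,
          Finset.mem_image, Set.Finite.mem_toFinset, hg] at he
        obtain ⟨w, hw, y, hy, rfl⟩ := he
        exact ⟨hSF w hw y hy, w, hw, y, hSB w hw hy, rfl⟩

lemma eGraph_eq_eF (H : SimpleGraph (Fin n)) (X Y : Set (Fin n)) :
    eGraph H X Y = eF H.edgeSet X Y := rfl


end Aux13

set_option maxHeartbeats 2000000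

/-- Lemma 2.8(3): under the standing setting, if `|F₁₂| ≥ ε⁻⁵ m log n` and
`deg_{F₁₂}(v, W₁) ≥ ε⁻⁴ log n / p` for all `v ∈ U`, then
`e_{F₂₃}(U, W₃ \ X) ≥ (α m p / 4) |U|`. (Here `m` plays the role of `ñ`.) -/
theorem statement_13 (α : ℝ) (hα0 : 0 < α) (hα1 : α < 1) :
    ∃ ε : ℝ, 0 < ε ∧ ∃ n₀ : ℕ, ∀ n : ℕ, n₀ ≤ n → ∀ p : ℝ, 0 < p → p < 1 →
    ∀ Γ G : SimpleGraph (Fin n), MemFamily n Γ G (4 * α) p →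
    ∀ m : ℕ, (ε ^ (-22 : ℤ) * Real.log n ^ 2 / p ^ 2 ≤ (m : ℝ)) →
    ∀ W₁ W₂ W₃ : Set (Fin n),
      Disjoint W₁ W₂ → Disjoint W₁ W₃ → Disjoint W₂ W₃ →
      IsGood n Γ G α ε p W₁ → IsGood n Γ G α ε p W₂ → IsGood n Γ G α ε p W₃ →
      W₁.ncard = m → W₂.ncard = m → W₃.ncard = m →
    ∀ X : Set (Fin n), X ⊆ W₃ → ((X.ncard : ℝ) ≤ ε ^ 4 * m) →
    ∀ F₁₂ : Set (Sym2 (Fin n)), F₁₂ ⊆ G.edgeSet →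
      (∀ e ∈ F₁₂, ∃ w₁ ∈ W₁, ∃ w₂ ∈ W₂, e = s(w₁, w₂)) →
    (ε ^ (-5 : ℤ) * m * Real.log n ≤ (F₁₂.ncard : ℝ)) →
    (∀ v ∈ Uset F₁₂ W₂, ε ^ (-4 : ℤ) * Real.log n / p ≤ (degF F₁₂ v W₁ : ℝ)) →
    α * m * p / 4 * (((Uset F₁₂ W₂).ncard : ℝ)) ≤
      (eF (F23 G F₁₂ W₁ W₂ W₃) (Uset F₁₂ W₂) (W₃ \ X) : ℝ) := by
  refine ⟨α ^ 2 / 100, by positivity, 3, ?_⟩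
  intro n hn p hp0 hp1 Γ G hmem m hm W₁ W₂ W₃ h12 h13 h23 hG₁ hG₂ hG₃ hc₁ hc₂ hc₃
    X hXW hXc F₁₂ hFE hFshape hFc hFdeg
  classical
  set ε : ℝ := α ^ 2 / 100 with hεdef
  set L : ℝ := Real.log n with hLdef
  have hε0 : 0 < ε := by positivity
  have hε1 : ε ≤ 1 / 100 := by rw [hεdef]; nlinarith only [hα0, hα1]
  have hε_le1 : ε ≤ 1 := hε1.trans (by norm_num)
  have hm0 : (0 : ℝ) ≤ m := Nat.cast_nonneg m
  have hL1 : 1 ≤ L := by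
    have h3 : (3 : ℝ) ≤ (n : ℝ) := by exact_mod_cast hn
    have he : Real.exp 1 ≤ 3 := by
      have := Real.exp_one_lt_d9
      linarith only [this]
    calc (1 : ℝ) = Real.log (Real.exp 1) := (Real.log_exp 1).symm
      _ ≤ Real.log 3 := Real.log_le_log (Real.exp_pos 1) he
      _ ≤ L := Real.log_le_log (by norm_num) h3
  have hz : ∀ k : ℕ, (ε : ℝ) ^ (-(k : ℤ)) = (ε ^ k)⁻¹ := by
    intro k; rw [zpow_neg, zpow_natCast]
  -- multiplied forms of hypotheses
  have hm' : L ^ 2 ≤ ε ^ 22 * (m : ℝ) * p ^ 2 := by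
    have h := hm
    rw [show (-22 : ℤ) = -(22 : ℕ) by norm_num, hz 22, div_le_iff₀ (by positivity),
      mul_comm ((ε ^ 22)⁻¹) (L ^ 2), ← div_eq_mul_inv, div_le_iff₀ (by positivity)] at h
    calc L ^ 2 ≤ (m : ℝ) * p ^ 2 * ε ^ 22 := h
      _ = ε ^ 22 * (m : ℝ) * p ^ 2 := by ring
  have hFc' : (m : ℝ) * L ≤ ε ^ 5 * (F₁₂.ncard : ℝ) := by
    have h := hFc
    rw [show (-5 : ℤ) = -(5 : ℕ) by norm_num, hz 5, mul_assoc, ← div_eq_inv_mul,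
      div_le_iff₀ (by positivity)] at h
    calc (m : ℝ) * L ≤ (F₁₂.ncard : ℝ) * ε ^ 5 := h
      _ = ε ^ 5 * (F₁₂.ncard : ℝ) := by ring
  -- threshold and N
  have hthr0 : (0 : ℝ) ≤ ε ^ (-3 : ℤ) * L / p := by
    have := zpow_pos hε0 (-3 : ℤ)
    positivity
  set N : ℕ := ⌈ε ^ (-3 : ℤ) * L / p⌉₊ with hNdef
  have hthrN : ε ^ (-3 : ℤ) * L / p ≤ (N : ℝ) := Nat.le_ceil _
  have hN0 : (0 : ℝ) ≤ (N : ℝ) := Nat.cast_nonneg N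
  have hNle : (N : ℝ) ≤ ε ^ (-3 : ℤ) * L / p + 1 := (Nat.ceil_lt_add_one hthr0).le
  have hthr_le : ε ^ (-3 : ℤ) * L / p ≤ ε * m * p := by
    rw [show (-3 : ℤ) = -(3 : ℕ) by norm_num, hz 3, div_le_iff₀ hp0, ← div_eq_inv_mul,
      div_le_iff₀ (by positivity)]
    have h1 : L ≤ L ^ 2 := by nlinarith only [hL1]
    have h2 : ε ^ 22 * (m : ℝ) * p ^ 2 ≤ ε ^ 4 * (m : ℝ) * p ^ 2 := by
      have hp22 := pow_le_pow_of_le_one hε0.le hε_le1 (show 4 ≤ 22 by norm_num)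
      have := mul_le_mul_of_nonneg_right hp22 (mul_nonneg hm0 (sq_nonneg p))
      calc ε ^ 22 * (m : ℝ) * p ^ 2 = ε ^ 22 * ((m : ℝ) * p ^ 2) := by ring
        _ ≤ ε ^ 4 * ((m : ℝ) * p ^ 2) := this
        _ = ε ^ 4 * (m : ℝ) * p ^ 2 := by ring
    calc L ≤ ε ^ 22 * (m : ℝ) * p ^ 2 := le_trans h1 hm'
      _ ≤ ε ^ 4 * (m : ℝ) * p ^ 2 := h2
      _ = ε * (m : ℝ) * p * p * ε ^ 3 := by ring
  have hone : (1 : ℝ) ≤ ε * m * p := by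
    have h1 : L ^ 2 ≤ ε * (m : ℝ) * p := by
      have h2 : ε ^ 22 * (m : ℝ) * p ^ 2 ≤ ε * (m : ℝ) * p := by
        have hp22 := pow_le_pow_of_le_one hε0.le hε_le1 (show 1 ≤ 22 by norm_num)
        rw [pow_one] at hp22
        have hpp : p ^ 2 ≤ p := by nlinarith only [hp0, hp1]
        have step1 : ε ^ 22 * ((m : ℝ) * p ^ 2) ≤ ε * ((m : ℝ) * p ^ 2) :=
          mul_le_mul_of_nonneg_right hp22 (mul_nonneg hm0 (sq_nonneg p))
        have step2 : (m : ℝ) * p ^ 2 ≤ (m : ℝ) * p := mul_le_mul_of_nonneg_left hpp hm0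
        have step3 : ε * ((m : ℝ) * p ^ 2) ≤ ε * ((m : ℝ) * p) :=
          mul_le_mul_of_nonneg_left step2 hε0.le
        calc ε ^ 22 * (m : ℝ) * p ^ 2 = ε ^ 22 * ((m : ℝ) * p ^ 2) := by ring
          _ ≤ ε * ((m : ℝ) * p ^ 2) := step1
          _ ≤ ε * ((m : ℝ) * p) := step3
          _ = ε * (m : ℝ) * p := by ring
      exact le_trans hm' h2
    nlinarith only [h1, hL1]
  have hN2 : (N : ℝ) ≤ 2 * (ε * m * p) := by
    calc (N : ℝ) ≤ ε ^ (-3 : ℤ) * L / p + 1 := hNle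
      _ ≤ ε * m * p + ε * m * p := by linarith
      _ = 2 * (ε * m * p) := by ring
  have hεp : ε * p ≤ 1 / 100 := by linarith only [mul_le_mul_of_nonneg_left hp1.le hε0.le, hε1]
  have hεpm : (m : ℝ) * (ε * p) ≤ (m : ℝ) * (1 / 100) :=
    mul_le_mul_of_nonneg_left hεp hm0
  have hm1 : (1 : ℝ) ≤ (m : ℝ) := by linarith only [hone, hεpm]
  have hNm : N ≤ m := by
    have : (N : ℝ) ≤ (m : ℝ) := by linarith only [hN2, hεpm]
    exact_mod_cast this
  -- U and D
  set U := Uset F₁₂ W₂ with hUdef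
  have hUW₂ : U ⊆ W₂ := fun v hv => hv.1
  have hUfin := U.toFinite
  set D : Fin n → Set (Fin n) := fun u => {w | w ∈ W₁ ∧ s(u, w) ∈ F₁₂} with hDdef
  have hDcard : ∀ u : Fin n, degF F₁₂ u W₁ = (D u).ncard := fun u => Aux13.degF_eq F₁₂ u W₁
  have hDsub : ∀ u : Fin n, D u ⊆ W₁ := fun u w hw => hw.1
  have hDadj : ∀ u : Fin n, ∀ w ∈ D u, G.Adj u w := by
    intro u w hw
    exact G.mem_edgeSet.mp (hFE hw.2)
  have hDnbr : ∀ u : Fin n, D u ⊆ Γ.neighborSet u ∩ W₁ := by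
    intro u w hw
    exact ⟨hmem.1 (hDadj u w hw), hw.1⟩
  -- |F₁₂| ≤ |U| (1+ε) m p
  have hdegF_le : ∀ u : Fin n, (degF F₁₂ u W₁ : ℝ) ≤ (1 + ε) * m * p := by
    intro u
    have h1 : degF F₁₂ u W₁ ≤ degIn Γ u W₁ := by
      rw [hDcard, degIn]
      exact Set.ncard_le_ncard (hDnbr u) (Set.toFinite _)
    have h2 := (hG₁.2.1 u).2
    rw [hc₁] at h2
    calc (degF F₁₂ u W₁ : ℝ) ≤ (degIn Γ u W₁ : ℝ) := Nat.cast_le.mpr h1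
      _ ≤ (1 + ε) * m * p := h2
  have hFU : (F₁₂.ncard : ℝ) ≤ (U.ncard : ℝ) * ((1 + ε) * m * p) := by
    have hsub : F₁₂ ⊆ ⋃ u ∈ hUfin.toFinset, {e ∈ F₁₂ | ∃ w ∈ W₁, e = s(u, w)} := by
      intro e he
      obtain ⟨w₁, hw₁, w₂, hw₂, rfl⟩ := hFshape e he
      have hw₂U : w₂ ∈ U := ⟨hw₂, ⟨s(w₁, w₂), he, Sym2.mem_mk_right w₁ w₂⟩⟩
      exact Set.mem_biUnion (hUfin.mem_toFinset.mpr hw₂U) ⟨he, w₁, hw₁, Sym2.eq_swap⟩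
    have hn1 : (F₁₂.ncard : ℝ) ≤ ∑ u ∈ hUfin.toFinset, (degF F₁₂ u W₁ : ℝ) := by
      have h1 : F₁₂.ncard ≤ (⋃ u ∈ hUfin.toFinset, {e ∈ F₁₂ | ∃ w ∈ W₁, e = s(u, w)}).ncard :=
        Set.ncard_le_ncard hsub (Set.toFinite _)
      have h2 : (⋃ u ∈ hUfin.toFinset, {e ∈ F₁₂ | ∃ w ∈ W₁, e = s(u, w)}).ncard
          ≤ ∑ u ∈ hUfin.toFinset, {e ∈ F₁₂ | ∃ w ∈ W₁, e = s(u, w)}.ncard := by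
        classical
        have heq : (⋃ u ∈ hUfin.toFinset, {e ∈ F₁₂ | ∃ w ∈ W₁, e = s(u, w)})
            = ↑(hUfin.toFinset.biUnion
                (fun u => ({e ∈ F₁₂ | ∃ w ∈ W₁, e = s(u, w)}).toFinite.toFinset)) := by
          ext e
          simp [Set.Finite.mem_toFinset]
        rw [heq, Set.ncard_coe_finset]
        refine le_trans (Finset.card_biUnion_le) ?_
        refine Finset.sum_le_sum ?_
        intro u _
        rw [Set.ncard_eq_toFinset_card _ ]
      have h3 : ∑ u ∈ hUfin.toFinset, {e ∈ F₁₂ | ∃ w ∈ W₁, e = s(u, w)}.ncard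
          = ∑ u ∈ hUfin.toFinset, degF F₁₂ u W₁ := by
        refine Finset.sum_congr rfl fun u _ => ?_
        rw [degF]
      calc (F₁₂.ncard : ℝ) ≤ ((∑ u ∈ hUfin.toFinset, degF F₁₂ u W₁ : ℕ) : ℝ) := by
            exact_mod_cast le_trans h1 (h3 ▸ h2)
        _ = ∑ u ∈ hUfin.toFinset, (degF F₁₂ u W₁ : ℝ) := by push_cast; ring
    calc (F₁₂.ncard : ℝ) ≤ ∑ u ∈ hUfin.toFinset, (degF F₁₂ u W₁ : ℝ) := hn1
      _ ≤ ∑ _u ∈ hUfin.toFinset, (1 + ε) * m * p := Finset.sum_le_sum fun u _ => hdegF_le u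
      _ = (hUfin.toFinset.card : ℝ) * ((1 + ε) * m * p) := by
          rw [Finset.sum_const, nsmul_eq_mul]
      _ = (U.ncard : ℝ) * ((1 + ε) * m * p) := by
          rw [Set.ncard_eq_toFinset_card _ hUfin]
  have hUc0 : (0 : ℝ) ≤ (U.ncard : ℝ) := Nat.cast_nonneg _
  have hU_thr : ε ^ (-3 : ℤ) * L / p ≤ (U.ncard : ℝ) := by
    rw [show (-3 : ℤ) = -(3 : ℕ) by norm_num, hz 3, div_le_iff₀ hp0, ← div_eq_inv_mul,
      div_le_iff₀ (by positivity)]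
    have h1 : (m : ℝ) * L ≤ ε ^ 5 * ((U.ncard : ℝ) * ((1 + ε) * m * p)) := by
      refine le_trans hFc' ?_
      have := mul_le_mul_of_nonneg_left hFU (pow_nonneg hε0.le 5)
      linarith only [hFc', this]
    have h2 : ε ^ 5 * (1 + ε) ≤ ε ^ 3 := by
      have ha : ε ^ 2 * (1 + ε) ≤ 1 := by
        have hsq : ε ^ 2 ≤ 1 / 10000 := by nlinarith only [hε1, hε0.le]
        have h2ε : (1 : ℝ) + ε ≤ 2 := by linarith only [hε_le1]
        have := mul_le_mul hsq h2ε (by linarith only [hε0.le]) (by norm_num)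
        linarith only [this]
      have := mul_le_mul_of_nonneg_left ha (pow_nonneg hε0.le 3)
      calc ε ^ 5 * (1 + ε) = ε ^ 3 * (ε ^ 2 * (1 + ε)) := by ring
        _ ≤ ε ^ 3 * 1 := this
        _ = ε ^ 3 := by ring
    have h4 : (0 : ℝ) ≤ (ε ^ 3 - ε ^ 5 * (1 + ε)) * ((U.ncard : ℝ) * p * m) := by
      refine mul_nonneg (by linarith) (by positivity)
    have h3 : L * (m : ℝ) ≤ (U.ncard : ℝ) * p * ε ^ 3 * (m : ℝ) := by
      linarith only [h1, h4]
    have hmpos : (0 : ℝ) < (m : ℝ) := by linarith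
    exact le_of_mul_le_mul_right h3 hmpos
  -- pad X
  have hXm : X.ncard ≤ m := hc₃ ▸ Set.ncard_le_ncard hXW (Set.toFinite _)
  obtain ⟨X', hXX', hX'W, hX'card⟩ := Set.exists_subsuperset_card_eq hXW
    (le_max_left X.ncard N) (by rw [hc₃]; exact max_le hXm hNm)
  have hX'thr : ε ^ (-3 : ℤ) * L / p ≤ (X'.ncard : ℝ) := by
    refine le_trans hthrN ?_
    have : N ≤ X'.ncard := hX'card ▸ le_max_right X.ncard N
    exact_mod_cast this
  have hX'le : (X'.ncard : ℝ) ≤ ε ^ 4 * m + N := by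
    have h1 : (max X.ncard N : ℕ) ≤ X.ncard + N := max_le (Nat.le_add_right _ _) (Nat.le_add_left _ _)
    have h2 : (X'.ncard : ℝ) ≤ (X.ncard : ℝ) + N := by
      rw [hX'card]; exact_mod_cast h1
    linarith only [h2, hXc, hN0]
  -- the sets Y and Z
  set Yset : Fin n → Set (Fin n) :=
    fun u => {y | y ∈ W₃ \ X ∧ s(u, y) ∈ F23 G F₁₂ W₁ W₂ W₃} with hYsetdef
  set Zset : Fin n → Set (Fin n) := fun u => X ∩ Γ.neighborSet u with hZsetdef
  -- per-vertex estimate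
  have key : ∀ u ∈ U, (α * m * p * (1 - ε) - 2 * (N : ℝ)) - ((Zset u).ncard : ℝ)
      ≤ ((Yset u).ncard : ℝ) := by
    intro u hu
    have huW₂ : u ∈ W₂ := hUW₂ hu
    have ht := hFdeg u hu
    rw [hDcard] at ht
    have hinv34 : (ε ^ 3)⁻¹ ≤ (ε ^ 4)⁻¹ :=
      inv_anti₀ (pow_pos hε0 4) (pow_le_pow_of_le_one hε0.le hε_le1 (by norm_num))
    have ht_thr : ε ^ (-3 : ℤ) * L / p ≤ ((D u).ncard : ℝ) := by
      refine le_trans ?_ ht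
      rw [show (-3 : ℤ) = -(3 : ℕ) by norm_num, show (-4 : ℤ) = -(4 : ℕ) by norm_num,
        hz 3, hz 4]
      have hL0 : (0 : ℝ) ≤ L := by linarith
      gcongr
    have ht0 : (0 : ℝ) < ((D u).ncard : ℝ) := by
      refine lt_of_lt_of_le ?_ ht_thr
      have := zpow_pos hε0 (-3 : ℤ)
      have hL0 : (0 : ℝ) < L := by linarith
      positivity
    -- pads
    have hYsub : Yset u ⊆ W₃ := fun y hy => hy.1.1
    have hYle : (Yset u).ncard ≤ m := hc₃ ▸ Set.ncard_le_ncard hYsub (Set.toFinite _)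
    obtain ⟨Y', hYY', hY'W, hY'card⟩ := Set.exists_subsuperset_card_eq hYsub
      (le_max_left (Yset u).ncard N) (by rw [hc₃]; exact max_le hYle hNm)
    have hZX : Zset u ⊆ X := Set.inter_subset_left
    have hZW : Zset u ⊆ W₃ := hZX.trans hXW
    have hZle : (Zset u).ncard ≤ m := hc₃ ▸ Set.ncard_le_ncard hZW (Set.toFinite _)
    obtain ⟨Z', hZZ', hZ'W, hZ'card⟩ := Set.exists_subsuperset_card_eq hZW
      (le_max_left (Zset u).ncard N) (by rw [hc₃]; exact max_le hZle hNm)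
    have hY'thr : ε ^ (-3 : ℤ) * L / p ≤ (Y'.ncard : ℝ) := by
      refine le_trans hthrN ?_
      have : N ≤ Y'.ncard := hY'card ▸ le_max_right (Yset u).ncard N
      exact_mod_cast this
    have hZ'thr : ε ^ (-3 : ℤ) * L / p ≤ (Z'.ncard : ℝ) := by
      refine le_trans hthrN ?_
      have : N ≤ Z'.ncard := hZ'card ▸ le_max_right (Zset u).ncard N
      exact_mod_cast this
    have hDfin := (D u).toFinite
    have hcardD : ((D u).ncard : ℝ) = (hDfin.toFinset.card : ℝ) := by
      rw [Set.ncard_eq_toFinset_card _ hDfin]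
    -- G5 sum
    have hsum1 : ((D u).ncard : ℝ) * (α * m * p ^ 2)
        ≤ ∑ w ∈ hDfin.toFinset, ((G.neighborSet u ∩ G.neighborSet w ∩ W₃).ncard : ℝ) := by
      have hterm : ∀ w ∈ hDfin.toFinset,
          α * m * p ^ 2 ≤ ((G.neighborSet u ∩ G.neighborSet w ∩ W₃).ncard : ℝ) := by
        intro w hw
        rw [Set.Finite.mem_toFinset] at hw
        have h5 := hG₃.2.2.2.2.1 u w (hDadj u w hw)
        rwa [hc₃] at h5
      calc ((D u).ncard : ℝ) * (α * m * p ^ 2)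
          = ∑ _w ∈ hDfin.toFinset, α * m * p ^ 2 := by
            rw [Finset.sum_const, nsmul_eq_mul, hcardD]
        _ ≤ _ := Finset.sum_le_sum hterm
    -- split
    have hsplit : ∀ w : Fin n, ((G.neighborSet u ∩ G.neighborSet w ∩ W₃).ncard : ℝ)
        ≤ ((G.neighborSet u ∩ G.neighborSet w ∩ (W₃ \ X)).ncard : ℝ)
          + ((G.neighborSet u ∩ G.neighborSet w ∩ X).ncard : ℝ) := by
      intro w
      have hsub : G.neighborSet u ∩ G.neighborSet w ∩ W₃
          ⊆ (G.neighborSet u ∩ G.neighborSet w ∩ (W₃ \ X))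
            ∪ (G.neighborSet u ∩ G.neighborSet w ∩ X) := by
        intro y hy
        by_cases hyX : y ∈ X
        · exact Or.inr ⟨hy.1, hyX⟩
        · exact Or.inl ⟨hy.1, hy.2, hyX⟩
      have h1 := Set.ncard_le_ncard hsub (Set.toFinite _)
      have h2 := Set.ncard_union_le (G.neighborSet u ∩ G.neighborSet w ∩ (W₃ \ X))
        (G.neighborSet u ∩ G.neighborSet w ∩ X)
      exact_mod_cast le_trans h1 h2
    -- counting: W₃\X part
    have hL1Y : ∑ w ∈ hDfin.toFinset, (G.neighborSet u ∩ G.neighborSet w ∩ (W₃ \ X)).ncard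
        ≤ eF Γ.edgeSet (D u) Y' := by
      refine Aux13.sum_ncard_le_eF Γ.edgeSet (D u) Y' (h13.mono (hDsub u) hY'W) _ ?_ ?_
      · intro w hw y hy
        refine hYY' ⟨hy.2, ?_⟩
        refine ⟨u, huW₂, y, hy.2.1, rfl, hy.1.1, w, hw.1, ?_, hy.1.2⟩
        rw [Sym2.eq_swap]
        exact hw.2
      · intro w hw y hy
        exact Γ.mem_edgeSet.mpr (hmem.1 hy.1.2)
    -- counting: X part
    have hL1Z : ∑ w ∈ hDfin.toFinset, (G.neighborSet u ∩ G.neighborSet w ∩ X).ncard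
        ≤ eF Γ.edgeSet (D u) Z' := by
      refine Aux13.sum_ncard_le_eF Γ.edgeSet (D u) Z' (h13.mono (hDsub u) hZ'W) _ ?_ ?_
      · intro w hw y hy
        refine hZZ' ⟨hy.2, ?_⟩
        exact hmem.1 hy.1.1
      · intro w hw y hy
        exact Γ.mem_edgeSet.mpr (hmem.1 hy.1.2)
    -- G1 bounds
    have hG1Y := (hG₁.1 (D u) Y' (hDsub u) (h13.mono (hDsub u) hY'W) ht_thr hY'thr).2
    have hG1Z := (hG₁.1 (D u) Z' (hDsub u) (h13.mono (hDsub u) hZ'W) ht_thr hZ'thr).2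
    rw [Aux13.eGraph_eq_eF] at hG1Y hG1Z
    -- combine
    have hchain : ((D u).ncard : ℝ) * (α * m * p ^ 2)
        ≤ ((D u).ncard : ℝ) * ((1 + ε) * (Y'.ncard : ℝ) * p + (1 + ε) * (Z'.ncard : ℝ) * p) := by
      have c1 : (∑ w ∈ hDfin.toFinset,
            ((G.neighborSet u ∩ G.neighborSet w ∩ W₃).ncard : ℝ))
          ≤ (∑ w ∈ hDfin.toFinset,
              ((G.neighborSet u ∩ G.neighborSet w ∩ (W₃ \ X)).ncard : ℝ))
            + ∑ w ∈ hDfin.toFinset,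
              ((G.neighborSet u ∩ G.neighborSet w ∩ X).ncard : ℝ) := by
        rw [← Finset.sum_add_distrib]
        exact Finset.sum_le_sum fun w _ => hsplit w
      have c2 : (∑ w ∈ hDfin.toFinset,
            ((G.neighborSet u ∩ G.neighborSet w ∩ (W₃ \ X)).ncard : ℝ))
          ≤ (eF Γ.edgeSet (D u) Y' : ℝ) := by
        have := hL1Y
        calc (∑ w ∈ hDfin.toFinset,
              ((G.neighborSet u ∩ G.neighborSet w ∩ (W₃ \ X)).ncard : ℝ))
            = ((∑ w ∈ hDfin.toFinset,
                (G.neighborSet u ∩ G.neighborSet w ∩ (W₃ \ X)).ncard : ℕ) : ℝ) := by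
              push_cast; ring
          _ ≤ (eF Γ.edgeSet (D u) Y' : ℝ) := Nat.cast_le.mpr hL1Y
      have c3 : (∑ w ∈ hDfin.toFinset,
            ((G.neighborSet u ∩ G.neighborSet w ∩ X).ncard : ℝ))
          ≤ (eF Γ.edgeSet (D u) Z' : ℝ) := by
        calc (∑ w ∈ hDfin.toFinset,
              ((G.neighborSet u ∩ G.neighborSet w ∩ X).ncard : ℝ))
            = ((∑ w ∈ hDfin.toFinset,
                (G.neighborSet u ∩ G.neighborSet w ∩ X).ncard : ℕ) : ℝ) := by
              push_cast; ring
          _ ≤ (eF Γ.edgeSet (D u) Z' : ℝ) := Nat.cast_le.mpr hL1Z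
      calc ((D u).ncard : ℝ) * (α * m * p ^ 2)
          ≤ (eF Γ.edgeSet (D u) Y' : ℝ) + (eF Γ.edgeSet (D u) Z' : ℝ) := by
            linarith only [hsum1, c1, c2, c3]
        _ ≤ (1 + ε) * ((D u).ncard : ℝ) * (Y'.ncard : ℝ) * p
            + (1 + ε) * ((D u).ncard : ℝ) * (Z'.ncard : ℝ) * p := by linarith only [hG1Y, hG1Z]
        _ = ((D u).ncard : ℝ) * ((1 + ε) * (Y'.ncard : ℝ) * p + (1 + ε) * (Z'.ncard : ℝ) * p) := by
            ring
    have hdiv : α * m * p ^ 2 ≤ (1 + ε) * (Y'.ncard : ℝ) * p + (1 + ε) * (Z'.ncard : ℝ) * p :=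
      le_of_mul_le_mul_left hchain ht0
    -- bounds on pads
    have hY'le : (Y'.ncard : ℝ) ≤ ((Yset u).ncard : ℝ) + N := by
      have h1 : (max (Yset u).ncard N : ℕ) ≤ (Yset u).ncard + N :=
        max_le (Nat.le_add_right _ _) (Nat.le_add_left _ _)
      have : (Y'.ncard : ℕ) ≤ (Yset u).ncard + N := hY'card ▸ h1
      exact_mod_cast this
    have hZ'le : (Z'.ncard : ℝ) ≤ ((Zset u).ncard : ℝ) + N := by
      have h1 : (max (Zset u).ncard N : ℕ) ≤ (Zset u).ncard + N :=
        max_le (Nat.le_add_right _ _) (Nat.le_add_left _ _)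
      have : (Z'.ncard : ℕ) ≤ (Zset u).ncard + N := hZ'card ▸ h1
      exact_mod_cast this
    -- divide out (1+ε) p
    have h5 : α * m * p * (1 - ε) * ((1 + ε) * p)
        ≤ ((Y'.ncard : ℝ) + (Z'.ncard : ℝ)) * ((1 + ε) * p) := by
      have hαmp0 : (0 : ℝ) ≤ α * m * p := by positivity
      linarith only [hdiv, mul_nonneg (mul_nonneg hαmp0 hp0.le) (sq_nonneg ε)]
    have h6 : α * m * p * (1 - ε) ≤ (Y'.ncard : ℝ) + (Z'.ncard : ℝ) :=
      le_of_mul_le_mul_right h5 (by positivity)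
    linarith only [h6, hY'le, hZ'le]
  -- global bound on sum of Z
  have hZsum : ∑ u ∈ hUfin.toFinset, ((Zset u).ncard : ℝ)
      ≤ (1 + ε) * (U.ncard : ℝ) * (ε ^ 4 * m + N) * p := by
    have h1 : ∑ u ∈ hUfin.toFinset, (Zset u).ncard ≤ eF Γ.edgeSet U X' := by
      refine Aux13.sum_ncard_le_eF Γ.edgeSet U X' (h23.mono hUW₂ hX'W) _ ?_ ?_
      · intro u hu y hy
        exact hXX' hy.1
      · intro u hu y hy
        exact Γ.mem_edgeSet.mpr hy.2
    have h2 := (hG₂.1 U X' hUW₂ (h23.mono hUW₂ hX'W) hU_thr hX'thr).2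
    rw [Aux13.eGraph_eq_eF] at h2
    have h3 : (∑ u ∈ hUfin.toFinset, ((Zset u).ncard : ℝ))
        ≤ (eF Γ.edgeSet U X' : ℝ) := by
      calc (∑ u ∈ hUfin.toFinset, ((Zset u).ncard : ℝ))
          = ((∑ u ∈ hUfin.toFinset, (Zset u).ncard : ℕ) : ℝ) := by push_cast; ring
        _ ≤ _ := Nat.cast_le.mpr h1
    have h4 : (1 + ε) * (U.ncard : ℝ) * (X'.ncard : ℝ) * p
        ≤ (1 + ε) * (U.ncard : ℝ) * (ε ^ 4 * m + N) * p := by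
      have h5 := mul_le_mul_of_nonneg_right (mul_le_mul_of_nonneg_left hX'le
        (mul_nonneg (by linarith only [hε0.le] : (0:ℝ) ≤ 1 + ε) hUc0)) hp0.le
      linarith only [h5]
    linarith only [h3, h2, h4]
  -- sum of Y is at most the edge count
  have hYsum : ∑ u ∈ hUfin.toFinset, ((Yset u).ncard : ℝ)
      ≤ (eF (F23 G F₁₂ W₁ W₂ W₃) U (W₃ \ X) : ℝ) := by
    have h1 : ∑ u ∈ hUfin.toFinset, (Yset u).ncard
        ≤ eF (F23 G F₁₂ W₁ W₂ W₃) U (W₃ \ X) := by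
      refine Aux13.sum_ncard_le_eF _ U (W₃ \ X) (h23.mono hUW₂ Set.diff_subset) _ ?_ ?_
      · intro u hu y hy
        exact hy.1
      · intro u hu y hy
        exact hy.2
    calc (∑ u ∈ hUfin.toFinset, ((Yset u).ncard : ℝ))
        = ((∑ u ∈ hUfin.toFinset, (Yset u).ncard : ℕ) : ℝ) := by push_cast; ring
      _ ≤ _ := Nat.cast_le.mpr h1
  -- sum the per-vertex estimate
  have hkeysum : (U.ncard : ℝ) * (α * m * p * (1 - ε) - 2 * (N : ℝ))
      - ∑ u ∈ hUfin.toFinset, ((Zset u).ncard : ℝ)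
      ≤ ∑ u ∈ hUfin.toFinset, ((Yset u).ncard : ℝ) := by
    have h1 : ∑ u ∈ hUfin.toFinset,
        ((α * m * p * (1 - ε) - 2 * (N : ℝ)) - ((Zset u).ncard : ℝ))
        ≤ ∑ u ∈ hUfin.toFinset, ((Yset u).ncard : ℝ) :=
      Finset.sum_le_sum fun u hu => key u (hUfin.mem_toFinset.mp hu)
    have h2 : ∑ u ∈ hUfin.toFinset,
        ((α * m * p * (1 - ε) - 2 * (N : ℝ)) - ((Zset u).ncard : ℝ))
        = (U.ncard : ℝ) * (α * m * p * (1 - ε) - 2 * (N : ℝ))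
          - ∑ u ∈ hUfin.toFinset, ((Zset u).ncard : ℝ) := by
      rw [Finset.sum_sub_distrib, Finset.sum_const, nsmul_eq_mul,
        Set.ncard_eq_toFinset_card _ hUfin]
    rw [h2] at h1
    exact h1
  -- final numeric step
  have hcoef : α * m * p / 4
      ≤ (α * m * p * (1 - ε) - 2 * (N : ℝ)) - (1 + ε) * (ε ^ 4 * m + N) * p := by
    have hq0 : (0 : ℝ) ≤ (m : ℝ) * p := mul_nonneg hm0 hp0.le
    have hNp : (N : ℝ) * p ≤ (N : ℝ) := mul_le_of_le_one_right hN0 hp1.le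
    have hpow2 : α ^ 2 ≤ α := pow_le_of_le_one hα0.le hα1.le (by norm_num)
    have hpow3 : α ^ 3 ≤ α := pow_le_of_le_one hα0.le hα1.le (by norm_num)
    have hpow8 : α ^ 8 ≤ α := pow_le_of_le_one hα0.le hα1.le (by norm_num)
    have hc0 : 0 ≤ 3 * α / 4 - α * ε - 8 * ε - 2 * ε ^ 4 := by
      rw [hεdef]
      have hexp : (α ^ 2 / 100) ^ 4 = α ^ 8 / 100000000 := by ring
      rw [hexp]
      have hmul : α * (α ^ 2 / 100) = α ^ 3 / 100 := by ring
      linarith only [hpow2, hpow3, hpow8, hα0.le]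
    have hc1 : 0 ≤ (3 * α / 4 - α * ε - 8 * ε - 2 * ε ^ 4) * ((m : ℝ) * p) :=
      mul_nonneg hc0 hq0
    have ha : (1 + ε) * (ε ^ 4 * m + N) * p ≤ 2 * (ε ^ 4 * ((m : ℝ) * p)) + 4 * (ε * ((m:ℝ) * p)) := by
      have he4 : (0 : ℝ) ≤ ε ^ 4 * ((m : ℝ) * p) := mul_nonneg (pow_nonneg hε0.le 4) hq0
      have ha1 : (1 + ε) * (ε ^ 4 * (m : ℝ)) * p ≤ 2 * (ε ^ 4 * ((m : ℝ) * p)) := by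
        nlinarith only [he4, hε_le1]
      have ha2 : (1 + ε) * (N : ℝ) * p ≤ 4 * (ε * ((m : ℝ) * p)) := by
        have hNp0 : (0 : ℝ) ≤ (N : ℝ) * p := mul_nonneg hN0 hp0.le
        nlinarith only [hNp, hN2, hNp0, hε_le1]
      calc (1 + ε) * (ε ^ 4 * m + N) * p
          = (1 + ε) * (ε ^ 4 * (m : ℝ)) * p + (1 + ε) * (N : ℝ) * p := by ring
        _ ≤ 2 * (ε ^ 4 * ((m : ℝ) * p)) + 4 * (ε * ((m:ℝ) * p)) := by linarith only [ha1, ha2]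
    have hb : 2 * (N : ℝ) ≤ 4 * (ε * ((m : ℝ) * p)) := by linarith only [hN2]
    linarith only [ha, hb, hc1]
  have hfinal : α * m * p / 4 * (U.ncard : ℝ)
      ≤ (U.ncard : ℝ) * (α * m * p * (1 - ε) - 2 * (N : ℝ))
        - (1 + ε) * (U.ncard : ℝ) * (ε ^ 4 * m + N) * p := by
    have := mul_le_mul_of_nonneg_left hcoef hUc0
    linarith only [this]
  calc α * m * p / 4 * ((Uset F₁₂ W₂).ncard : ℝ)
      = α * m * p / 4 * (U.ncard : ℝ) := rfl
    _ ≤ (U.ncard : ℝ) * (α * m * p * (1 - ε) - 2 * (N : ℝ))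
        - (1 + ε) * (U.ncard : ℝ) * (ε ^ 4 * m + N) * p := hfinal
    _ ≤ (U.ncard : ℝ) * (α * m * p * (1 - ε) - 2 * (N : ℝ))
        - ∑ u ∈ hUfin.toFinset, ((Zset u).ncard : ℝ) := by linarith only [hfinal, hZsum]
    _ ≤ ∑ u ∈ hUfin.toFinset, ((Yset u).ncard : ℝ) := hkeysum
    _ ≤ (eF (F23 G F₁₂ W₁ W₂ W₃) U (W₃ \ X) : ℝ) := hYsum
end
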